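/- arXiv:0706.3441 — 4 statements merged into one kernel-verified Lean document; each statement's English description precedes it below -/
import Mathlib

section
/- Let K/L be an extension of H-graded fields with extension degree n = [K:L] (the rank of K as a free L-module), residue degree f = [K₁:L₁] (the degree of the field extension of identity-graded components), and ramification index e = #(ρ(K^×)/ρ(L^×)), where ρ sends a homogeneous unit to its grading index. Then n = e·f (with the convention ∞·d = ∞·∞ = ∞). -/
open scoped DirectSum

/-- An `H`-graded field: a nonzero commutative ring with an internal grading by the
commutative group `H` in which every nonzero homogeneous element is invertible
(with homogeneous inverse). -/
structure GradedField (H : Type*) [CommGroup H] [DecidableEq H] (K : Type*) [CommRing K] where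
  comp : H → AddSubgroup K
  one_mem : (1 : K) ∈ comp 1
  mul_mem : ∀ {g h : H} {x y : K}, x ∈ comp g → y ∈ comp h → x * y ∈ comp (g * h)
  isInternal : DirectSum.IsInternal fun h : H => comp h
  zero_ne_one : (0 : K) ≠ 1
  inv_mem : ∀ {h : H} {x : K}, x ∈ comp h → x ≠ 0 → ∃ y ∈ comp h⁻¹, x * y = 1

namespace GradedField

variable {H : Type*} [CommGroup H] [DecidableEq H] {K : Type*} [CommRing K] (F : GradedField H K)

/-- A homogeneous element. -/
def Homogeneous (x : K) : Prop := ∃ h, x ∈ F.comp h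

/-- A subring is graded if each of its elements is a sum of homogeneous elements of the
subring. -/
def IsGradedSubring (R : Subring K) : Prop :=
  ∀ x ∈ R, x ∈ AddSubgroup.closure {y : K | y ∈ R ∧ F.Homogeneous y}

/-- A graded subfield: a graded subring closed under inverses of nonzero homogeneous
elements. -/
structure IsGradedSubfield (L : Subring K) : Prop where
  graded : F.IsGradedSubring L
  inv_mem : ∀ x ∈ L, F.Homogeneous x → x ≠ 0 → Ring.inverse x ∈ L

/-- A graded valuation ring of the graded subfield `L`: a graded subring `R ⊆ L` such that
every nonzero homogeneous element of `L` lies in `R` or has its inverse in `R`. -/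
def IsGradedValRing (L R : Subring K) : Prop :=
  R ≤ L ∧ F.IsGradedSubring R ∧
    ∀ x ∈ L, F.Homogeneous x → x ≠ 0 → (x ∈ R ∨ Ring.inverse x ∈ R)

/-- The identity component `K₁`, as a subring. -/
def oneComponent : Subring K where
  carrier := F.comp 1
  one_mem' := F.one_mem
  mul_mem' := fun ha hb => by simpa using F.mul_mem ha hb
  add_mem' := fun ha hb => (F.comp 1).add_mem ha hb
  zero_mem' := (F.comp 1).zero_mem
  neg_mem' := fun ha => (F.comp 1).neg_mem ha

theorem mem_oneComponent {x : K} : x ∈ F.oneComponent ↔ x ∈ F.comp 1 := Iff.rfl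

/-- The value group `ρ(L^×) ⊆ H` of a graded subfield `L`. -/
def valueGroup (L : Subring K)
    (hL : ∀ x ∈ L, F.Homogeneous x → x ≠ 0 → Ring.inverse x ∈ L) : Subgroup H where
  carrier := {h | ∃ x ∈ F.comp h, x ≠ 0 ∧ x ∈ L}
  one_mem' := ⟨1, F.one_mem, Ne.symm F.zero_ne_one, L.one_mem⟩
  mul_mem' := by
    rintro g h ⟨x, hx, hx0, hxL⟩ ⟨y, hy, hy0, hyL⟩
    obtain ⟨x', hx', hxx'⟩ := F.inv_mem hx hx0
    obtain ⟨y', hy', hyy'⟩ := F.inv_mem hy hy0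
    refine ⟨x * y, F.mul_mem hx hy, ?_, L.mul_mem hxL hyL⟩
    intro h0
    have h1 : x * y * (x' * y') = 1 := by rw [mul_mul_mul_comm, hxx', hyy', one_mul]
    rw [h0, zero_mul] at h1
    exact F.zero_ne_one h1
  inv_mem' := by
    rintro g ⟨x, hx, hx0, hxL⟩
    obtain ⟨y, hy, hxy⟩ := F.inv_mem hx hx0
    have hu : IsUnit x := IsUnit.of_mul_eq_one y hxy
    have hyx : Ring.inverse x = y := by
      calc Ring.inverse x = Ring.inverse x * (x * y) := by rw [hxy, mul_one]
        _ = Ring.inverse x * x * y := by ring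
        _ = y := by rw [Ring.inverse_mul_cancel x hu, one_mul]
    refine ⟨y, hy, ?_, ?_⟩
    · intro h0; rw [h0, mul_zero] at hxy; exact F.zero_ne_one hxy
    · rw [← hyx]; exact hL x hxL ⟨g, hx⟩ hx0

/-- The value group `ρ(K^×)` of the whole graded field. -/
def fullValueGroup : Subgroup H :=
  F.valueGroup ⊤ (fun _ _ _ _ => Subring.mem_top _)

/-- `K₁` as a module over `L₁ = K₁ ∩ L`. -/
def oneSubmodule (L : Subring K) : Submodule ↥(F.oneComponent ⊓ L) K where
  carrier := F.comp 1
  add_mem' := fun ha hb => (F.comp 1).add_mem ha hb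
  zero_mem' := (F.comp 1).zero_mem
  smul_mem' := fun c x hx => by
    have hc : (c : K) ∈ F.comp 1 := ((Subring.mem_inf).mp c.2).1
    have := F.mul_mem hc hx
    simpa [Subring.smul_def] using this

/-- A graded automorphism: a ring automorphism preserving each graded component. -/
def IsGradedAut (σ : RingAut K) : Prop := ∀ (h : H) (x : K), x ∈ F.comp h → σ x ∈ F.comp h

end GradedField

/-- The fixed subring `K^G` of a group of ring automorphisms. -/
def fixedSubring {K : Type*} [CommRing K] (G : Subgroup (RingAut K)) : Subring K where
  carrier := {x | ∀ σ ∈ G, σ x = x}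
  one_mem' := fun σ _ => map_one σ
  mul_mem' := fun ha hb σ hσ => by rw [map_mul, ha σ hσ, hb σ hσ]
  add_mem' := fun ha hb σ hσ => by rw [map_add, ha σ hσ, hb σ hσ]
  zero_mem' := fun σ _ => map_zero σ
  neg_mem' := fun ha σ hσ => by rw [map_neg, ha σ hσ]

theorem mem_fixedSubring {K : Type*} [CommRing K] {G : Subgroup (RingAut K)} {x : K} :
    x ∈ fixedSubring G ↔ ∀ σ ∈ G, σ x = x := Iff.rfl


namespace GradedField

variable {H : Type*} [CommGroup H] [DecidableEq H] {K : Type*} [CommRing K]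
variable (F : GradedField H K)

/-- Decomposition of an element into its homogeneous components. -/
noncomputable def decompose (x : K) : ⨁ h : H, ↥(F.comp h) :=
  (Equiv.ofBijective _ F.isInternal).symm x

/-- The degree-`h` homogeneous component of `x`. -/
noncomputable def component (h : H) (x : K) : K := (F.decompose x h : K)

/-- The inertia subgroup of `G`: graded automorphisms in `G` acting trivially on `K₁`. -/
def inertia (G : Subgroup (RingAut K)) : Subgroup (RingAut K) where
  carrier := {σ | σ ∈ G ∧ ∀ x ∈ F.comp 1, σ x = x}
  one_mem' := ⟨G.one_mem, fun _ _ => rfl⟩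
  mul_mem' := fun {a b} ha hb => ⟨G.mul_mem ha.1 hb.1, fun x hx => by
    show a (b x) = x
    rw [hb.2 x hx, ha.2 x hx]⟩
  inv_mem' := fun {a} ha => ⟨G.inv_mem ha.1, fun x hx => by
    conv_lhs => rw [← ha.2 x hx]
    exact a.symm_apply_apply x⟩

theorem mem_inertia {G : Subgroup (RingAut K)} {σ : RingAut K} :
    σ ∈ F.inertia G ↔ σ ∈ G ∧ ∀ x ∈ F.comp 1, σ x = x := Iff.rfl

end GradedField

/-- A subring `S` containing a subring `L`, viewed as an `L`-submodule of the ambient ring. -/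
def Subring.toSubmoduleOver {K : Type*} [CommRing K] (L S : Subring K) (hLS : L ≤ S) :
    Submodule ↥L K where
  carrier := S
  add_mem' := fun ha hb => S.add_mem ha hb
  zero_mem' := S.zero_mem
  smul_mem' := fun c x hx => S.mul_mem (hLS c.2) hx

section ZR

variable {H : Type*} [CommGroup H] [DecidableEq H] {K : Type*} [CommRing K]

/-- The Zariski–Riemann space of graded valuation rings of `K` containing `k₀`. -/
def GradedField.ZR (F : GradedField H K) (k₀ : Subring K) : Type _ :=
  {O : Subring K // F.IsGradedValRing ⊤ O ∧ k₀ ≤ O}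

/-- The set of homogeneous units (nonzero homogeneous elements) of `K`. -/
def GradedField.HomogUnits (F : GradedField H K) : Type _ :=
  {x : K // x ≠ 0 ∧ F.Homogeneous x}

open Classical in
/-- The embedding of the Zariski–Riemann space into `{0,1}^{K^×}` via characteristic
functions. -/
noncomputable def GradedField.chi (F : GradedField H K) (k₀ : Subring K) (O : F.ZR k₀) :
    F.HomogUnits → Bool :=
  fun x => decide (x.1 ∈ O.1)

/-- Basic open sets `P{F}∖{G}` of the constructible topology, for finite sets `F`, `G` of
homogeneous units. -/
def GradedField.constructibleBasis (F : GradedField H K) (k₀ : Subring K) :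
    Set (Set (F.ZR k₀)) :=
  {s | ∃ Fs Gs : Finset K, (∀ a ∈ Fs, a ≠ 0 ∧ F.Homogeneous a) ∧
    (∀ b ∈ Gs, b ≠ 0 ∧ F.Homogeneous b) ∧
    s = {O : F.ZR k₀ | (∀ a ∈ Fs, a ∈ O.1) ∧ ∀ b ∈ Gs, b ∉ O.1}}

/-- The constructible topology on the Zariski–Riemann space. -/
def GradedField.constructibleTop (F : GradedField H K) (k₀ : Subring K) :
    TopologicalSpace (F.ZR k₀) :=
  TopologicalSpace.generateFrom (F.constructibleBasis k₀)


universe u v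

namespace GradedField

variable {H : Type*} [CommGroup H] [DecidableEq H] {K : Type*} [CommRing K]
variable (F : GradedField H K)

/-- The decomposition additive equivalence. -/
noncomputable def deco : K ≃+ ⨁ h : H, ↥(F.comp h) :=
  (AddEquiv.ofBijective (DirectSum.coeAddMonoidHom F.comp) F.isInternal).symm

lemma deco_symm_apply (x : ⨁ h : H, ↥(F.comp h)) :
    F.deco.symm x = DirectSum.coeAddMonoidHom F.comp x := rfl

/-- The degree-`d` component of `x`, as an element of `K`. -/
noncomputable def cpt (d : H) (x : K) : K := (F.deco x d : K)

lemma cpt_mem (d : H) (x : K) : F.cpt d x ∈ F.comp d := (F.deco x d).2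

lemma deco_of_mem {d : H} {x : K} (hx : x ∈ F.comp d) :
    F.deco x = DirectSum.of (fun h : H => ↥(F.comp h)) d ⟨x, hx⟩ := by
  apply F.deco.symm.injective
  rw [AddEquiv.symm_apply_apply, deco_symm_apply, DirectSum.coeAddMonoidHom_of]

lemma cpt_of_mem_same {d : H} {x : K} (hx : x ∈ F.comp d) : F.cpt d x = x := by
  rw [cpt, deco_of_mem F hx, DirectSum.of_eq_same]

lemma cpt_of_mem_ne {h d : H} {x : K} (hx : x ∈ F.comp h) (hne : h ≠ d) :
    F.cpt d x = 0 := by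
  rw [cpt, deco_of_mem F hx, DirectSum.of_eq_of_ne _ _ _ hne.symm]
  rfl

/-- `cpt d` as an additive monoid hom. -/
noncomputable def cptHom (d : H) : K →+ K where
  toFun := F.cpt d
  map_zero' := by simp [cpt]
  map_add' := fun x y => by
    show ((F.deco (x + y)) d : K) = _
    rw [map_add, DirectSum.add_apply]
    rfl

lemma cptHom_apply (d : H) (x : K) : F.cptHom d x = F.cpt d x := rfl

open Classical in
lemma sum_cpt (x : K) : ∑ d ∈ (F.deco x).support, F.cpt d x = x := by
  classical
  conv_rhs => rw [← F.deco.symm_apply_apply x]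
  rw [deco_symm_apply]
  conv_rhs => rw [← DirectSum.sum_support_of (F.deco x)]
  rw [map_sum]
  exact Finset.sum_congr rfl fun d _ => by rw [DirectSum.coeAddMonoidHom_of]; rfl

open Classical in
lemma cpt_of_not_mem_support (x : K) {d : H} (hd : d ∉ (F.deco x).support) :
    F.cpt d x = 0 := by
  classical
  rw [DFinsupp.notMem_support_iff] at hd
  show ((F.deco x) d : K) = 0
  rw [hd]; rfl

lemma eq_zero_of_cpt (x : K) (h : ∀ d, F.cpt d x = 0) : x = 0 := by
  classical
  rw [← F.sum_cpt x]
  exact Finset.sum_eq_zero fun d _ => h d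

lemma cpt_mul_right (a w : K) {h : H} (hw : w ∈ F.comp h) (d : H) :
    F.cpt d (a * w) = F.cpt (d * h⁻¹) a * w := by
  classical
  conv_lhs => rw [← F.sum_cpt a, Finset.sum_mul, ← cptHom_apply, map_sum]
  have key : ∀ g ∈ (F.deco a).support,
      F.cptHom d (F.cpt g a * w) = if g = d * h⁻¹ then F.cpt g a * w else 0 := by
    intro g _
    have hm : F.cpt g a * w ∈ F.comp (g * h) := F.mul_mem (F.cpt_mem g a) hw
    by_cases hgd : g = d * h⁻¹
    · subst hgd
      rw [if_pos rfl, cptHom_apply]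
      exact F.cpt_of_mem_same (by rwa [inv_mul_cancel_right] at hm)
    · rw [if_neg hgd, cptHom_apply]
      refine F.cpt_of_mem_ne hm (fun hc => hgd ?_)
      rw [← hc, mul_inv_cancel_right]
  rw [Finset.sum_congr rfl key, Finset.sum_ite_eq' (F.deco a).support (d * h⁻¹)
    (fun g => F.cpt g a * w)]
  by_cases hs : d * h⁻¹ ∈ (F.deco a).support
  · rw [if_pos hs]
  · rw [if_neg hs, F.cpt_of_not_mem_support a hs, zero_mul]

end GradedField

namespace GradedField

variable {H : Type*} [CommGroup H] [DecidableEq H] {K : Type*} [CommRing K]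
variable (F : GradedField H K) (L : Subring K)

lemma cpt_mem_of_mem (hL : F.IsGradedSubfield L) {a : K} (ha : a ∈ L) (d : H) :
    F.cpt d a ∈ L := by
  have hmem := hL.graded a ha
  set T : AddSubgroup K :=
    { carrier := {x | ∀ d, F.cpt d x ∈ L}
      zero_mem' := fun d => by rw [← F.cptHom_apply, map_zero]; exact L.zero_mem
      add_mem' := fun {x y} hx hy d => by
        rw [← F.cptHom_apply, map_add]; exact L.add_mem (hx d) (hy d)
      neg_mem' := fun {x} hx d => by
        rw [← F.cptHom_apply, map_neg]; exact L.neg_mem (hx d) } with hT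
  have : AddSubgroup.closure {y : K | y ∈ L ∧ F.Homogeneous y} ≤ T := by
    rw [AddSubgroup.closure_le]
    rintro y ⟨hyL, h, hy⟩ d
    by_cases hhd : h = d
    · subst hhd; rwa [F.cpt_of_mem_same hy]
    · rw [F.cpt_of_mem_ne hy hhd]; exact L.zero_mem
  exact this hmem d

lemma mem_valueGroup_of_cpt (hL : F.IsGradedSubfield L) {a : K} (ha : a ∈ L) {d : H}
    (h0 : F.cpt d a ≠ 0) : d ∈ F.valueGroup L hL.inv_mem :=
  ⟨F.cpt d a, F.cpt_mem d a, h0, F.cpt_mem_of_mem L hL ha d⟩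

lemma exists_inv_L (hL : F.IsGradedSubfield L) {g : H} {x : K} (hx : x ∈ F.comp g)
    (hxL : x ∈ L) (hx0 : x ≠ 0) : ∃ y, y ∈ F.comp g⁻¹ ∧ y ∈ L ∧ x * y = 1 := by
  obtain ⟨y, hy, hxy⟩ := F.inv_mem hx hx0
  have hu : IsUnit x := IsUnit.of_mul_eq_one y hxy
  have hyx : Ring.inverse x = y := by
    calc Ring.inverse x = Ring.inverse x * (x * y) := by rw [hxy, mul_one]
      _ = Ring.inverse x * x * y := by ring
      _ = y := by rw [Ring.inverse_mul_cancel x hu, one_mul]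
  exact ⟨y, hy, hyx ▸ hL.inv_mem x hxL ⟨g, hx⟩ hx0, hxy⟩

lemma exists_unit_of_mem_valueGroup (hL : F.IsGradedSubfield L) {g : H}
    (hg : g ∈ F.valueGroup L hL.inv_mem) :
    ∃ x y : K, x ∈ F.comp g ∧ x ∈ L ∧ y ∈ F.comp g⁻¹ ∧ y ∈ L ∧ x * y = 1 := by
  obtain ⟨x, hx, hx0, hxL⟩ := hg
  obtain ⟨y, hy, hyL, hxy⟩ := F.exists_inv_L L hL hx hxL hx0
  exact ⟨x, y, hx, hxL, hy, hyL, hxy⟩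

lemma isField_L1 (hL : F.IsGradedSubfield L) : IsField ↥(F.oneComponent ⊓ L) := by
  refine ⟨⟨0, 1, fun h => F.zero_ne_one (congrArg Subtype.val h)⟩, mul_comm, ?_⟩
  rintro ⟨x, hx⟩ hx0
  have hx0' : x ≠ 0 := fun h => hx0 (Subtype.ext h)
  obtain ⟨hx1, hxL⟩ := Subring.mem_inf.mp hx
  obtain ⟨y, hy, hyL, hxy⟩ := F.exists_inv_L L hL hx1 hxL hx0'
  rw [inv_one] at hy
  exact ⟨⟨y, Subring.mem_inf.mpr ⟨hy, hyL⟩⟩, Subtype.ext hxy⟩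

end GradedField


set_option maxHeartbeats 2000000 in
set_option synthInstance.maxHeartbeats 400000 in
/-- For an extension `K/L` of `H`-graded fields, the degree `n = [K:L]` equals `e·f`, where
`f = [K₁:L₁]` and `e = #(ρ(K^×)/ρ(L^×))`, as cardinals (so the conventions for `∞` hold). -/
theorem GradedField.rank_eq_ramification_mul_residue {H : Type u} [CommGroup H] [DecidableEq H]
    {K : Type v} [CommRing K] (F : GradedField H K) (L : Subring K)
    (hL : F.IsGradedSubfield L) :
    Cardinal.lift.{u} (Module.rank ↥L K) =
      Cardinal.lift.{v}
          (Cardinal.mk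
            (↥F.fullValueGroup ⧸ (F.valueGroup L hL.inv_mem).subgroupOf F.fullValueGroup)) *
        Cardinal.lift.{u} (Module.rank ↥(F.oneComponent ⊓ L) ↥(F.oneSubmodule L)) := by
  classical
  haveI : Nontrivial K := ⟨⟨0, 1, F.zero_ne_one⟩⟩
  haveI : Nontrivial ↥L := ⟨⟨0, 1, fun h => F.zero_ne_one (congrArg Subtype.val h)⟩⟩
  letI : Field ↥(F.oneComponent ⊓ L) := (F.isField_L1 L hL).toField
  set G := F.fullValueGroup with hGdef
  set N := (F.valueGroup L hL.inv_mem).subgroupOf G with hNdef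
  set V := F.oneSubmodule L with hVdef
  set J := Module.Basis.ofVectorSpaceIndex ↥(F.oneComponent ⊓ L) ↥V with hJdef
  set b : Module.Basis J ↥(F.oneComponent ⊓ L) ↥V := Module.Basis.ofVectorSpace _ _ with hbdef
  -- choose homogeneous units for each coset
  have hexu : ∀ q : ↥G ⧸ N, ∃ x : K, x ∈ F.comp ((Quotient.out q : ↥G) : H) ∧ x ≠ 0 := by
    intro q
    obtain ⟨x, hx, hx0, -⟩ := (Quotient.out q).2
    exact ⟨x, hx, hx0⟩
  choose u hu hu0 using hexu
  have hexu' : ∀ q : ↥G ⧸ N,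
      ∃ y : K, y ∈ F.comp (((Quotient.out q : ↥G) : H))⁻¹ ∧ u q * y = 1 := fun q => by
    obtain ⟨y, hy, h1⟩ := F.inv_mem (hu q) (hu0 q); exact ⟨y, hy, h1⟩
  choose u' hu' huu' using hexu'
  set w : (↥G ⧸ N) × J → K := fun i => u i.1 * ((b i.2 : ↥V) : K) with hwdef
  have hbmem : ∀ j : J, ((b j : ↥V) : K) ∈ F.comp 1 := fun j => (b j).2
  have hw : ∀ i, w i ∈ F.comp ((Quotient.out i.1 : ↥G) : H) := fun i => by
    have := F.mul_mem (hu i.1) (hbmem i.2)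
    rwa [mul_one] at this
  -- coset equality criterion
  have coset_eq : ∀ q q' : ↥G ⧸ N,
      ((Quotient.out q : ↥G) : H) * (((Quotient.out q' : ↥G) : H))⁻¹ ∈
        F.valueGroup L hL.inv_mem → q = q' := by
    intro q q' hmem
    rw [← QuotientGroup.out_eq' q, ← QuotientGroup.out_eq' q', QuotientGroup.eq]
    refine Subgroup.mem_subgroupOf.mpr ?_
    have h2 := (F.valueGroup L hL.inv_mem).inv_mem hmem
    rw [mul_inv_rev, inv_inv] at h2
    have hcoe : (((Quotient.out q : ↥G)⁻¹ * Quotient.out q' : ↥G) : H) =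
        ((Quotient.out q : ↥G) : H)⁻¹ * ((Quotient.out q' : ↥G) : H) := rfl
    rw [hcoe, mul_comm]
    exact h2
  -- the span
  set S := Submodule.span ↥L (Set.range w) with hSdef
  have step1 : ∀ (q : ↥G ⧸ N), ∀ z ∈ F.comp 1, z * u q ∈ S := by
    intro q z hz
    have hzV : z ∈ V := hz
    have htop : (⟨z, hzV⟩ : ↥V) ∈ (⊤ : Submodule ↥(F.oneComponent ⊓ L) ↥V) := trivial
    rw [← b.span_eq] at htop
    have key : ∀ (x : ↥V), x ∈ Submodule.span ↥(F.oneComponent ⊓ L) (Set.range ⇑b) →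
        (x : K) * u q ∈ S := by
      intro x hx
      refine Submodule.span_induction (p := fun (x : ↥V) _ => ((x : K) * u q ∈ S)) ?_ ?_ ?_ ?_ hx
      · rintro x ⟨j, rfl⟩
        have h1 : ((b j : ↥V) : K) * u q = w (q, j) := mul_comm _ _
        rw [h1]
        exact Submodule.subset_span ⟨(q, j), rfl⟩
      · simpa using S.zero_mem
      · intro x y _ _ hx hy
        have : ((x + y : ↥V) : K) * u q = (x : K) * u q + (y : K) * u q := by
          push_cast; ring
        rw [this]; exact S.add_mem hx hy
      · intro c x _ hx
        have hcL : (c : K) ∈ L := (Subring.mem_inf.mp c.2).2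
        have hce : ((c • x : ↥V) : K) * u q = (⟨(c : K), hcL⟩ : ↥L) • ((x : K) * u q) := by
          show ((c : K) * (x : K)) * u q = (c : K) * ((x : K) * u q)
          ring
        rw [hce]; exact S.smul_mem _ hx
    exact key _ htop
  have step2 : ∀ (d : H), ∀ z ∈ F.comp d, z ∈ S := by
    intro d z hz
    by_cases hz0 : z = 0
    · rw [hz0]; exact S.zero_mem
    have hdG : d ∈ G := ⟨z, hz, hz0, Subring.mem_top z⟩
    set q : ↥G ⧸ N := QuotientGroup.mk ⟨d, hdG⟩ with hq
    have hrel : (⟨d, hdG⟩ : ↥G)⁻¹ * Quotient.out q ∈ N := by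
      rw [← QuotientGroup.eq, QuotientGroup.out_eq']
    have hgV : d⁻¹ * ((Quotient.out q : ↥G) : H) ∈ F.valueGroup L hL.inv_mem :=
      Subgroup.mem_subgroupOf.mp hrel
    obtain ⟨l, l', hl, hlL, hl', hl'L, hll'⟩ := F.exists_unit_of_mem_valueGroup L hL hgV
    have hmem1 : z * u' q * l ∈ F.comp 1 := by
      have h3 := F.mul_mem (F.mul_mem hz (hu' q)) hl
      have heq : d * (((Quotient.out q : ↥G) : H))⁻¹ * (d⁻¹ * ((Quotient.out q : ↥G) : H)) = 1 := by
        rw [mul_mul_mul_comm]; simp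
      rwa [heq] at h3
    have h1 : (z * u' q * l) * u q ∈ S := step1 q _ hmem1
    have h2 : (⟨l', hl'L⟩ : ↥L) • ((z * u' q * l) * u q) ∈ S := S.smul_mem _ h1
    have heq2 : (⟨l', hl'L⟩ : ↥L) • ((z * u' q * l) * u q) = z := by
      show l' * ((z * u' q * l) * u q) = z
      calc l' * ((z * u' q * l) * u q) = z * (u q * u' q) * (l * l') := by ring
        _ = z := by rw [huu', hll', mul_one, mul_one]
    rwa [heq2] at h2
  have hspan : ⊤ ≤ S := by
    intro x _
    rw [← F.sum_cpt x]
    exact S.sum_mem fun d _ => step2 d _ (F.cpt_mem d x)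
  -- linear independence
  have hli : LinearIndependent ↥L w := by
    rw [linearIndependent_iff']
    intro s g hsum i₀ hi₀
    obtain ⟨q₀, j₀⟩ := i₀
    refine Subtype.ext (F.eq_zero_of_cpt _ fun d => ?_)
    by_cases hdv : d ∈ F.valueGroup L hL.inv_mem
    swap
    · by_contra hc
      exact hdv (F.mem_valueGroup_of_cpt L hL (g (q₀, j₀)).2 hc)
    obtain ⟨l, l', hl, hlL, hl', hl'L, hll'⟩ := F.exists_unit_of_mem_valueGroup L hL hdv
    set D := d * ((Quotient.out q₀ : ↥G) : H) with hD
    have hcpt := congrArg (F.cptHom D) hsum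
    rw [map_sum, map_zero] at hcpt
    set α : (↥G ⧸ N) × J → K :=
      fun i => F.cpt (D * (((Quotient.out i.1 : ↥G) : H))⁻¹) (g i : K) with hα
    have hterm : ∀ i ∈ s, F.cptHom D (g i • w i) = α i * w i := fun i _ => by
      show F.cpt D ((g i : K) * w i) = _
      exact F.cpt_mul_right _ _ (hw i) D
    rw [show (∑ i ∈ s, F.cptHom D (g i • w i)) = ∑ i ∈ s, α i * w i from
      Finset.sum_congr rfl hterm] at hcpt
    have hvanish : ∀ i ∈ s, α i * w i ≠ 0 → i.1 = q₀ := by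
      intro i _ hne
      have hαne : α i ≠ 0 := fun h => hne (by rw [h, zero_mul])
      have hDv : D * (((Quotient.out i.1 : ↥G) : H))⁻¹ ∈ F.valueGroup L hL.inv_mem :=
        F.mem_valueGroup_of_cpt L hL (g i).2 hαne
      have hmem : ((Quotient.out q₀ : ↥G) : H) * (((Quotient.out i.1 : ↥G) : H))⁻¹ ∈
          F.valueGroup L hL.inv_mem := by
        have h4 := (F.valueGroup L hL.inv_mem).mul_mem
          ((F.valueGroup L hL.inv_mem).inv_mem hdv) hDv
        have heq : d⁻¹ * (D * (((Quotient.out i.1 : ↥G) : H))⁻¹) =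
            ((Quotient.out q₀ : ↥G) : H) * (((Quotient.out i.1 : ↥G) : H))⁻¹ := by
          rw [hD, mul_assoc d, inv_mul_cancel_left]
        rwa [heq] at h4
      exact (coset_eq q₀ i.1 hmem).symm
    rw [← Finset.sum_filter_of_ne hvanish] at hcpt
    set t := s.filter (fun i => i.1 = q₀) with ht
    have hmul : ∑ i ∈ t, l' * u' q₀ * (α i * w i) = 0 := by
      rw [← Finset.mul_sum, hcpt, mul_zero]
    have hc'mem : ∀ j : J, l' * F.cpt d ((g (q₀, j) : K)) ∈ F.oneComponent ⊓ L := by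
      intro j
      refine Subring.mem_inf.mpr ⟨?_, L.mul_mem hl'L (F.cpt_mem_of_mem L hL (g (q₀, j)).2 d)⟩
      have h5 := F.mul_mem hl' (F.cpt_mem d ((g (q₀, j) : K)))
      rwa [show d⁻¹ * d = 1 from by simp] at h5
    set c' : J → ↥(F.oneComponent ⊓ L) := fun j => ⟨_, hc'mem j⟩ with hc'
    set T := t.image Prod.snd with hT
    have hinj : ∀ x ∈ t, ∀ y ∈ t, x.2 = y.2 → x = y := by
      intro x hx y hy hxy
      have hx1 : x.1 = q₀ := (Finset.mem_filter.mp hx).2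
      have hy1 : y.1 = q₀ := (Finset.mem_filter.mp hy).2
      exact Prod.ext (hx1.trans hy1.symm) hxy
    have hsum2 : ∑ j ∈ T, c' j • b j = (0 : ↥V) := by
      apply Subtype.val_injective
      have hcoe : ((∑ j ∈ T, c' j • b j : ↥V) : K) =
          ∑ j ∈ T, (l' * F.cpt d ((g (q₀, j) : K))) * ((b j : ↥V) : K) := by
        calc ((∑ j ∈ T, c' j • b j : ↥V) : K) = V.subtype (∑ j ∈ T, c' j • b j) := rfl
          _ = ∑ j ∈ T, V.subtype (c' j • b j) := map_sum _ _ _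
          _ = ∑ j ∈ T, (l' * F.cpt d ((g (q₀, j) : K))) * ((b j : ↥V) : K) :=
            Finset.sum_congr rfl fun j _ => by rw [map_smul]; rfl
      show ((∑ j ∈ T, c' j • b j : ↥V) : K) = ((0 : ↥V) : K)
      rw [hcoe]
      have himg : ∑ j ∈ T, (l' * F.cpt d ((g (q₀, j) : K))) * ((b j : ↥V) : K) =
          ∑ i ∈ t, (l' * F.cpt d ((g (q₀, i.2) : K))) * ((b i.2 : ↥V) : K) :=
        Finset.sum_image hinj
      rw [himg]
      have hfinal : ∑ i ∈ t, (l' * F.cpt d ((g (q₀, i.2) : K))) * ((b i.2 : ↥V) : K) =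
          ∑ i ∈ t, l' * u' q₀ * (α i * w i) := by
        refine Finset.sum_congr rfl ?_
        rintro ⟨iq, ij⟩ hi
        obtain rfl : iq = q₀ := (Finset.mem_filter.mp hi).2
        have hαeq : α (iq, ij) = F.cpt d ((g (iq, ij) : K)) := by
          show F.cpt (D * (((Quotient.out (iq, ij).1 : ↥G) : H))⁻¹) ((g (iq, ij) : K)) =
            F.cpt d ((g (iq, ij) : K))
          rw [hD, mul_inv_cancel_right]
        have hweq : w (iq, ij) = u iq * ((b ij : ↥V) : K) := rfl
        rw [hαeq, hweq]
        calc (l' * F.cpt d ((g (iq, ij) : K))) * ((b ij : ↥V) : K)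
            = (l' * F.cpt d ((g (iq, ij) : K))) * ((b ij : ↥V) : K) * (u iq * u' iq) := by
              rw [huu' iq, mul_one]
          _ = l' * u' iq * (F.cpt d ((g (iq, ij) : K)) * (u iq * ((b ij : ↥V) : K))) := by ring
      rw [hfinal, hmul]
      rfl
    have hj₀T : j₀ ∈ T :=
      Finset.mem_image.mpr ⟨(q₀, j₀), Finset.mem_filter.mpr ⟨hi₀, rfl⟩, rfl⟩
    have hc'0 : c' j₀ = 0 := linearIndependent_iff'.mp b.linearIndependent T c' hsum2 j₀ hj₀T
    have h0 : l' * F.cpt d ((g (q₀, j₀) : K)) = 0 := congrArg Subtype.val hc'0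
    show F.cpt d ((g (q₀, j₀) : K)) = 0
    calc F.cpt d ((g (q₀, j₀) : K)) = l * (l' * F.cpt d ((g (q₀, j₀) : K))) := by
          rw [← mul_assoc, hll', one_mul]
      _ = 0 := by rw [h0, mul_zero]
  -- assemble
  set bas : Module.Basis ((↥G ⧸ N) × J) ↥L K := Module.Basis.mk hli hspan with hbas
  have h1 := bas.mk_eq_rank
  have h2 : (Cardinal.mk J) = Module.rank ↥(F.oneComponent ⊓ L) ↥V := Module.Basis.mk_eq_rank'' b
  have h1' : Cardinal.mk ((↥G ⧸ N) × J) = Cardinal.lift.{u} (Module.rank ↥L K) := by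
    rw [Cardinal.lift_id', Cardinal.lift_umax] at h1
    exact h1
  rw [← h1', Cardinal.mk_prod, h2]
end ZR
end

section
/- Let K be an H-graded field and G a finite subgroup of the automorphism group of K (as graded ring). Then the graded subring L = K^G of G-invariants is a graded field, and K has finite degree over L equal to the order of G. -/
open scoped DirectSum

section ZR

variable {H : Type*} [CommGroup H] [DecidableEq H] {K : Type*} [CommRing K]

namespace GradedField

open DirectSum

variable {H : Type*} [CommGroup H] [DecidableEq H] {K : Type*} [CommRing K] (F : GradedField H K)

theorem nt (F : GradedField H K) : Nontrivial K := ⟨1, 0, fun h => F.zero_ne_one h.symm⟩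

noncomputable scoped instance dec : DirectSum.Decomposition F.comp :=
  F.isInternal.chooseDecomposition

theorem isUnit_homog {h : H} {x : K} (hx : x ∈ F.comp h) (h0 : x ≠ 0) : IsUnit x := by
  obtain ⟨y, -, hxy⟩ := F.inv_mem hx h0
  exact IsUnit.of_mul_eq_one y hxy

theorem inverse_mem {h : H} {x : K} (hx : x ∈ F.comp h) : Ring.inverse x ∈ F.comp h⁻¹ := by
  haveI := F.nt
  rcases eq_or_ne x 0 with rfl | h0
  · rw [Ring.inverse_zero]; exact (F.comp h⁻¹).zero_mem
  obtain ⟨y, hy, hxy⟩ := F.inv_mem hx h0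
  have hu : IsUnit x := IsUnit.of_mul_eq_one y hxy
  have : Ring.inverse x = y := by
    rw [← one_mul y, ← Ring.inverse_mul_cancel x hu, mul_assoc, hxy, mul_one]
  rwa [this]

theorem mul_inverse_homog {h : H} {x : K} (hx : x ∈ F.comp h) (h0 : x ≠ 0) :
    x * Ring.inverse x = 1 :=
  Ring.mul_inverse_cancel x (F.isUnit_homog hx h0)

theorem inverse_mul_homog {h : H} {x : K} (hx : x ∈ F.comp h) (h0 : x ≠ 0) :
    Ring.inverse x * x = 1 :=
  Ring.inverse_mul_cancel x (F.isUnit_homog hx h0)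

theorem mul_cancel_homog {h : H} {y : K} (hy : y ∈ F.comp h) (h0 : y ≠ 0) {a b : K}
    (hab : a * y = b * y) : a = b := by
  have := congrArg (· * Ring.inverse y) hab
  simpa [mul_assoc, F.mul_inverse_homog hy h0] using this

theorem homog_mul_ne_zero {g h : H} {x y : K} (hx : x ∈ F.comp g) (hy : y ∈ F.comp h)
    (hx0 : x ≠ 0) (hy0 : y ≠ 0) : x * y ≠ 0 := by
  haveI := F.nt
  exact ((F.isUnit_homog hx hx0).mul (F.isUnit_homog hy hy0)).ne_zero

theorem exists_ratio {γ : H} {x y : K} (hx : x ∈ F.comp γ) (hy : y ∈ F.comp γ) (hy0 : y ≠ 0) :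
    ∃ c ∈ F.comp 1, x = c * y := by
  refine ⟨x * Ring.inverse y, by simpa using F.mul_mem hx (F.inverse_mem hy), ?_⟩
  rw [mul_assoc, F.inverse_mul_homog hy hy0, mul_one]

theorem decompose_map {σ : RingAut K} (hσ : F.IsGradedAut σ) (x : K) (h : H) :
    (DirectSum.decompose F.comp (σ x) h : K) = σ (DirectSum.decompose F.comp x h : K) := by
  induction x using DirectSum.Decomposition.inductionOn F.comp with
  | zero => simp
  | @homogeneous i m =>
      rcases eq_or_ne h i with rfl | hne
      · rw [DirectSum.decompose_coe, DirectSum.of_eq_same,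
          DirectSum.decompose_of_mem F.comp (hσ h m m.2), DirectSum.of_eq_same]
      · rw [DirectSum.decompose_coe, DirectSum.of_eq_of_ne _ _ _ hne,
          DirectSum.decompose_of_mem F.comp (hσ i m m.2),
          DirectSum.of_eq_of_ne _ _ _ hne]
        simp
  | add a b ha hb =>
      rw [map_add, DirectSum.decompose_add, DirectSum.decompose_add, DirectSum.add_apply,
        DirectSum.add_apply, AddSubmonoid.coe_add, AddSubmonoid.coe_add, ha, hb, map_add]

end GradedField
namespace GradedField

open DirectSum

variable {H : Type*} [CommGroup H] [DecidableEq H] {K : Type*} [CommRing K] (F : GradedField H K)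

theorem decompose_mem_fixed {G : Subgroup (RingAut K)} (hG : ∀ σ ∈ G, F.IsGradedAut σ)
    {x : K} (hx : x ∈ fixedSubring G) (h : H) :
    (DirectSum.decompose F.comp x h : K) ∈ fixedSubring G := fun σ hσ => by
  rw [← F.decompose_map (hG σ hσ), hx σ hσ]

theorem fixed_inverse_mem {K : Type*} [CommRing K] {G : Subgroup (RingAut K)} {x : K}
    (hx : x ∈ fixedSubring G) :
    Ring.inverse x ∈ fixedSubring G := by
  intro σ hσ
  by_cases hu : IsUnit x
  · have h1 : x * Ring.inverse x = 1 := Ring.mul_inverse_cancel x hu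
    have h2 : x * σ (Ring.inverse x) = 1 := by
      have := congrArg σ h1
      rwa [map_mul, map_one, hx σ hσ] at this
    calc σ (Ring.inverse x) = (Ring.inverse x * x) * σ (Ring.inverse x) := by
          rw [Ring.inverse_mul_cancel x hu, one_mul]
      _ = Ring.inverse x * (x * σ (Ring.inverse x)) := by rw [mul_assoc]
      _ = Ring.inverse x := by rw [h2, mul_one]
  · rw [Ring.inverse_non_unit x hu, map_zero]

theorem isGradedSubfield_fixed {G : Subgroup (RingAut K)} (hG : ∀ σ ∈ G, F.IsGradedAut σ) :
    F.IsGradedSubfield (fixedSubring G) := by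
  constructor
  · intro x hx
    classical
    have hsum := DirectSum.sum_support_decompose F.comp x
    rw [← hsum]
    refine AddSubgroup.sum_mem _ fun h _ => AddSubgroup.subset_closure ?_
    exact ⟨F.decompose_mem_fixed hG hx h, h, SetLike.coe_mem _⟩
  · intro x hx _ _
    exact fixed_inverse_mem hx

open Classical in
/-- A choice of nonzero homogeneous element in each nonempty graded component. -/
noncomputable def u (γ : H) : K :=
  if h : ∃ x, x ∈ F.comp γ ∧ x ≠ 0 then h.choose else 0

open Classical in
theorem u_mem (γ : H) : F.u γ ∈ F.comp γ := by
  rw [u]; split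
  · next h => exact h.choose_spec.1
  · exact (F.comp γ).zero_mem

theorem mem_fullValueGroup {γ : H} : γ ∈ F.fullValueGroup ↔ ∃ x, x ∈ F.comp γ ∧ x ≠ 0 := by
  constructor
  · rintro ⟨x, hx, h0, -⟩; exact ⟨x, hx, h0⟩
  · rintro ⟨x, hx, h0⟩; exact ⟨x, hx, h0, trivial⟩

theorem u_ne {γ : H} (hγ : γ ∈ F.fullValueGroup) : F.u γ ≠ 0 := by
  classical
  rw [F.mem_fullValueGroup] at hγ
  rw [u, dif_pos hγ]
  exact hγ.choose_spec.2

theorem mem_fullValueGroup_of {γ : H} {x : K} (hx : x ∈ F.comp γ) (h0 : x ≠ 0) :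
    γ ∈ F.fullValueGroup :=
  F.mem_fullValueGroup.2 ⟨x, hx, h0⟩

end GradedField
namespace GradedField

variable {H : Type*} [CommGroup H] [DecidableEq H] {K : Type*} [CommRing K] (F : GradedField H K)

/-- The identity component of a graded field is a field. -/
noncomputable scoped instance fieldOne : Field ↥F.oneComponent := by
  haveI := F.nt
  refine IsField.toField ?_
  refine ⟨⟨0, 1, fun h => F.zero_ne_one (congrArg Subtype.val h)⟩, mul_comm, ?_⟩
  intro a ha
  have ha' : (a : K) ≠ 0 := fun h => ha (Subtype.ext h)
  obtain ⟨y, hy, hxy⟩ := F.inv_mem (F.mem_oneComponent.1 a.2) ha'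
  rw [inv_one] at hy
  exact ⟨⟨y, hy⟩, Subtype.ext hxy⟩

/-- Restriction of graded automorphisms in `G` to the identity component. -/
def restrictHom (G : Subgroup (RingAut K)) (hG : ∀ σ ∈ G, F.IsGradedAut σ) :
    ↥G →* RingAut ↥F.oneComponent where
  toFun σ :=
    { toFun := fun x => ⟨σ.1 x, hG σ.1 σ.2 1 x.1 x.2⟩
      invFun := fun x => ⟨σ.1.symm x, hG σ.1⁻¹ (G.inv_mem σ.2) 1 x.1 x.2⟩
      left_inv := fun x => Subtype.ext (σ.1.symm_apply_apply x)
      right_inv := fun x => Subtype.ext (σ.1.apply_symm_apply x)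
      map_mul' := fun x y => Subtype.ext (map_mul σ.1 x.1 y.1)
      map_add' := fun x y => Subtype.ext (map_add σ.1 x.1 y.1) }
  map_one' := by ext x; rfl
  map_mul' := fun a b => by ext x; rfl

theorem restrictHom_apply {G : Subgroup (RingAut K)} {hG : ∀ σ ∈ G, F.IsGradedAut σ}
    (σ : ↥G) (x : ↥F.oneComponent) : (F.restrictHom G hG σ x : K) = σ.1 x := rfl

theorem mem_ker_restrictHom {G : Subgroup (RingAut K)} {hG : ∀ σ ∈ G, F.IsGradedAut σ}
    {σ : ↥G} : σ ∈ (F.restrictHom G hG).ker ↔ ∀ x ∈ F.comp 1, σ.1 x = x := by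
  rw [MonoidHom.mem_ker]
  constructor
  · intro h x hx
    have := DFunLike.congr_fun h (⟨x, hx⟩ : ↥F.oneComponent)
    exact congrArg Subtype.val this
  · intro h
    refine DFunLike.ext _ _ fun x => Subtype.ext ?_
    show σ.1 x.1 = x.1
    exact h x.1 x.2

theorem mem_fixedPoints_iff {G : Subgroup (RingAut K)} {hG : ∀ σ ∈ G, F.IsGradedAut σ}
    {c : ↥F.oneComponent} :
    c ∈ FixedPoints.subfield ↥(F.restrictHom G hG).range ↥F.oneComponent ↔
      (c : K) ∈ fixedSubring G := by
  constructor
  · intro hc σ hσ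
    have := hc ⟨F.restrictHom G hG ⟨σ, hσ⟩, ⟨σ, hσ⟩, rfl⟩
    exact congrArg Subtype.val this
  · intro hc τ
    obtain ⟨σ, hστ⟩ := τ.2
    have : τ • c = τ.1 c := rfl
    rw [this, ← hστ]
    exact Subtype.ext (hc σ.1 σ.2)

end GradedField
namespace GradedField

variable {H : Type*} [CommGroup H] [DecidableEq H] {K : Type*} [CommRing K] (F : GradedField H K)

/-- The pairing `χ_σ(γ) = σ(u_γ)/u_γ` with values in the identity component. -/
noncomputable def pair (G : Subgroup (RingAut K)) (hG : ∀ σ ∈ G, F.IsGradedAut σ)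
    (σ : ↥G) (γ : H) : ↥F.oneComponent :=
  ⟨σ.1 (F.u γ) * Ring.inverse (F.u γ), by
    have h1 : σ.1 (F.u γ) ∈ F.comp γ := hG σ.1 σ.2 γ _ (F.u_mem γ)
    have h2 := F.inverse_mem (F.u_mem γ)
    simpa [mem_oneComponent] using F.mul_mem h1 h2⟩

variable {G : Subgroup (RingAut K)} {hG : ∀ σ ∈ G, F.IsGradedAut σ}

theorem pair_spec {σ : ↥G} {γ : H} (hγ : γ ∈ F.fullValueGroup) :
    σ.1 (F.u γ) = (F.pair G hG σ γ : K) * F.u γ := by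
  show σ.1 (F.u γ) = σ.1 (F.u γ) * Ring.inverse (F.u γ) * F.u γ
  rw [mul_assoc, F.inverse_mul_homog (F.u_mem γ) (F.u_ne hγ), mul_one]

theorem map_u_ne {σ : ↥G} {γ : H} (hγ : γ ∈ F.fullValueGroup) : σ.1 (F.u γ) ≠ 0 := by
  intro h
  exact F.u_ne hγ (σ.1.injective (h.trans (map_zero σ.1).symm))

theorem pair_ne {σ : ↥G} {γ : H} (hγ : γ ∈ F.fullValueGroup) :
    F.pair G hG σ γ ≠ 0 := by
  intro h
  have h0 : (F.pair G hG σ γ : K) = 0 := by rw [h]; rfl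
  have := F.pair_spec (hG := hG) (σ := σ) hγ
  rw [h0, zero_mul] at this
  exact F.map_u_ne hγ this

theorem pair_one_iff {σ : ↥G} {γ : H} (hγ : γ ∈ F.fullValueGroup) :
    F.pair G hG σ γ = 1 ↔ σ.1 (F.u γ) = F.u γ := by
  constructor
  · intro h
    rw [F.pair_spec (hG := hG) hγ, h]
    push_cast
    rw [one_mul]
  · intro h
    have h2 : (F.pair G hG σ γ : K) * F.u γ = 1 * F.u γ := by
      rw [one_mul, ← F.pair_spec (hG := hG) hγ, h]
    exact Subtype.ext (by simpa using F.mul_cancel_homog (F.u_mem γ) (F.u_ne hγ) h2)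

theorem pair_mul_right {σ : ↥G} (hσ : σ ∈ (F.restrictHom G hG).ker) {γ δ : H}
    (hγ : γ ∈ F.fullValueGroup) (hδ : δ ∈ F.fullValueGroup) :
    F.pair G hG σ (γ * δ) = F.pair G hG σ γ * F.pair G hG σ δ := by
  have hσ' := F.mem_ker_restrictHom.1 hσ
  have hγδ : γ * δ ∈ F.fullValueGroup := F.fullValueGroup.mul_mem hγ hδ
  have hmul : F.u γ * F.u δ ∈ F.comp (γ * δ) := F.mul_mem (F.u_mem γ) (F.u_mem δ)
  have hne : F.u γ * F.u δ ≠ 0 :=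
    F.homog_mul_ne_zero (F.u_mem γ) (F.u_mem δ) (F.u_ne hγ) (F.u_ne hδ)
  obtain ⟨c, hc, hceq⟩ := F.exists_ratio (F.u_mem (γ * δ)) hmul hne
  have h2 : σ.1 (F.u (γ * δ)) =
      ((F.pair G hG σ γ * F.pair G hG σ δ : ↥F.oneComponent) : K) * F.u (γ * δ) := by
    conv_lhs => rw [hceq]
    rw [map_mul, map_mul, hσ' c hc, F.pair_spec (hG := hG) hγ, F.pair_spec (hG := hG) hδ, hceq]
    push_cast
    ring
  have h1 : σ.1 (F.u (γ * δ)) = (F.pair G hG σ (γ * δ) : K) * F.u (γ * δ) := F.pair_spec hγδ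
  exact Subtype.ext (F.mul_cancel_homog (F.u_mem (γ * δ)) (F.u_ne hγδ) (h1.symm.trans h2))

theorem pair_one_left {γ : H} (hγ : γ ∈ F.fullValueGroup) :
    F.pair G hG 1 γ = 1 := by
  rw [F.pair_one_iff hγ]
  rfl

theorem pair_mul_left {σ τ : ↥G} (hσ : σ ∈ (F.restrictHom G hG).ker) {γ : H}
    (hγ : γ ∈ F.fullValueGroup) :
    F.pair G hG (σ * τ) γ = F.pair G hG σ γ * F.pair G hG τ γ := by
  have hσ' := F.mem_ker_restrictHom.1 hσ
  have hτp : (F.pair G hG τ γ : K) ∈ F.comp 1 := (F.pair G hG τ γ).2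
  have h2 : (σ * τ).1 (F.u γ) =
      ((F.pair G hG σ γ * F.pair G hG τ γ : ↥F.oneComponent) : K) * F.u γ := by
    have : (σ * τ).1 (F.u γ) = σ.1 (τ.1 (F.u γ)) := rfl
    rw [this, F.pair_spec (hG := hG) hγ, map_mul, hσ' _ hτp, F.pair_spec (hG := hG) hγ]
    push_cast
    ring
  exact Subtype.ext (F.mul_cancel_homog (F.u_mem γ) (F.u_ne hγ) ((F.pair_spec hγ).symm.trans h2))

theorem valueGroup_le_full (L : Subring K)
    (hL : ∀ x ∈ L, F.Homogeneous x → x ≠ 0 → Ring.inverse x ∈ L) :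
    F.valueGroup L hL ≤ F.fullValueGroup := by
  rintro γ ⟨x, hx, h0, -⟩
  exact F.mem_fullValueGroup_of hx h0

theorem pair_eq_one_of_mem_valueGroup {σ : ↥G} (hσ : σ ∈ (F.restrictHom G hG).ker)
    {γ : H} (hγ : γ ∈ F.valueGroup (fixedSubring G) (fun x hx h1 h2 => fixed_inverse_mem hx)) :
    F.pair G hG σ γ = 1 := by
  have hσ' := F.mem_ker_restrictHom.1 hσ
  obtain ⟨w, hw, hw0, hwL⟩ := hγ
  have hγΓ : γ ∈ F.fullValueGroup := F.mem_fullValueGroup_of hw hw0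
  obtain ⟨c, hc, hceq⟩ := F.exists_ratio (F.u_mem γ) hw hw0
  rw [F.pair_one_iff hγΓ, hceq, map_mul, hσ' c hc, hwL σ.1 σ.2]

theorem eq_one_of_pair_eq_one {σ : ↥G} (hσ : σ ∈ (F.restrictHom G hG).ker)
    (h : ∀ γ ∈ F.fullValueGroup, F.pair G hG σ γ = 1) : σ = 1 := by
  have hσ' := F.mem_ker_restrictHom.1 hσ
  have hfix : ∀ (γ : H), ∀ x ∈ F.comp γ, σ.1 x = x := by
    intro γ x hx
    rcases eq_or_ne x 0 with rfl | h0
    · exact map_zero σ.1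
    have hγ : γ ∈ F.fullValueGroup := F.mem_fullValueGroup_of hx h0
    obtain ⟨c, hc, hceq⟩ := F.exists_ratio hx (F.u_mem γ) (F.u_ne hγ)
    rw [hceq, map_mul, hσ' c hc, (F.pair_one_iff hγ).1 (h γ hγ)]
  apply Subtype.ext
  apply RingEquiv.ext
  intro x
  classical
  show σ.1 x = x
  conv_lhs => rw [← DirectSum.sum_support_decompose F.comp x]
  rw [map_sum, Finset.sum_congr rfl fun γ _ => hfix γ _ (SetLike.coe_mem _)]
  exact DirectSum.sum_support_decompose F.comp x

end GradedField
namespace GradedField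

variable {H : Type*} [CommGroup H] [DecidableEq H] {K : Type*} [CommRing K] (F : GradedField H K)

variable {G : Subgroup (RingAut K)} {hG : ∀ σ ∈ G, F.IsGradedAut σ}

theorem pair_pow {σ : ↥G} (hσ : σ ∈ (F.restrictHom G hG).ker) {γ : H}
    (hγ : γ ∈ F.fullValueGroup) (n : ℕ) :
    F.pair G hG (σ ^ n) γ = F.pair G hG σ γ ^ n := by
  induction n with
  | zero => simpa using F.pair_one_left hγ
  | succ n ih =>
      rw [pow_succ, pow_succ, F.pair_mul_left (pow_mem hσ n) hγ, ih]

theorem mem_valueGroup_of_pair_eq_one [Finite ↥G] {γ : H} (hγ : γ ∈ F.fullValueGroup)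
    (hfixu : ∀ σ : ↥G, σ ∈ (F.restrictHom G hG).ker → σ.1 (F.u γ) = F.u γ) :
    γ ∈ F.valueGroup (fixedSubring G) (fun _ hx _ _ => fixed_inverse_mem hx) := by
  classical
  haveI := F.nt
  letI : Fintype ↥G := Fintype.ofFinite _
  set N := (F.restrictHom G hG).ker with hN
  set uγ := F.u γ with huγ
  by_contra hcon
  -- Step 1: all trace elements vanish
  have hT0 : ∀ c : ↥F.oneComponent, ∑ σ : ↥G, σ.1 ((c : K) * uγ) = 0 := by
    intro c
    have hTmem : (∑ σ : ↥G, σ.1 ((c : K) * uγ)) ∈ F.comp γ := by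
      apply AddSubgroup.sum_mem
      intro σ _
      have : (c : K) * uγ ∈ F.comp γ := by
        simpa using F.mul_mem c.2 (F.u_mem γ)
      exact hG σ.1 σ.2 γ _ this
    have hTfix : (∑ σ : ↥G, σ.1 ((c : K) * uγ)) ∈ fixedSubring G := by
      intro τ hτ
      rw [map_sum]
      exact Fintype.sum_equiv (Equiv.mulLeft (⟨τ, hτ⟩ : ↥G)) _ _ fun σ => rfl
    by_contra hT
    exact hcon ⟨_, hTmem, hT, hTfix⟩
  -- Step 2: rewrite as a linear relation among restricted automorphisms
  have hEq : ∀ c : ↥F.oneComponent,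
      ∑ σ : ↥G, F.restrictHom G hG σ c * F.pair G hG σ γ = (0 : ↥F.oneComponent) := by
    intro c
    have h2 : (∑ σ : ↥G, ((F.restrictHom G hG σ c * F.pair G hG σ γ :
        ↥F.oneComponent) : K)) * uγ = 0 := by
      rw [Finset.sum_mul, ← hT0 c]
      refine Finset.sum_congr rfl fun σ _ => ?_
      push_cast
      rw [F.restrictHom_apply, map_mul, F.pair_spec (hG := hG) hγ]
      ring
    have h3 : (∑ σ : ↥G, ((F.restrictHom G hG σ c * F.pair G hG σ γ :
        ↥F.oneComponent) : K)) = (0 : K) :=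
      F.mul_cancel_homog (F.u_mem γ) (F.u_ne hγ) (by rw [h2, zero_mul])
    apply Subtype.ext
    rw [AddSubmonoidClass.coe_finset_sum]
    exact h3
  -- Step 3: group the sum along the fibers of the quotient map
  letI : DecidableEq (↥G ⧸ N) := Classical.decEq _
  letI : Fintype (↥G ⧸ N) := Fintype.ofFinite _
  set Φ := QuotientGroup.kerLift (F.restrictHom G hG) with hΦ
  have hdconst : ∀ σ τ : ↥G, (QuotientGroup.mk σ : ↥G ⧸ N) = QuotientGroup.mk τ →
      F.pair G hG σ γ = F.pair G hG τ γ := by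
    intro σ τ hmk
    have hmem : τ⁻¹ * σ ∈ N := QuotientGroup.eq.1 hmk.symm
    have hu : σ.1 uγ = τ.1 uγ := by
      have hστ : σ = τ * (τ⁻¹ * σ) := by group
      rw [hστ]
      show τ.1 ((τ⁻¹ * σ).1 uγ) = τ.1 uγ
      rw [hfixu _ hmem]
    apply Subtype.ext
    refine F.mul_cancel_homog (F.u_mem γ) (F.u_ne hγ) ?_
    rw [← F.pair_spec (hG := hG) hγ, ← F.pair_spec (hG := hG) hγ]
    exact hu
  have fibequiv : ∀ t : ↥G ⧸ N, {σ : ↥G // (QuotientGroup.mk σ : ↥G ⧸ N) = t} ≃ ↥N := by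
    intro t
    refine ⟨fun σ => ⟨t.out⁻¹ * σ.1, ?_⟩, fun ν => ⟨t.out * ν.1, ?_⟩, ?_, ?_⟩
    · exact QuotientGroup.eq.1 (by rw [QuotientGroup.out_eq', σ.2])
    · rw [QuotientGroup.mk_mul_of_mem t.out ν.2, QuotientGroup.out_eq']
    · intro σ; apply Subtype.ext; simp
    · intro ν; apply Subtype.ext; simp
  have key : ∀ c : ↥F.oneComponent,
      ∑ t : ↥G ⧸ N, ((Nat.card ↥N : ↥F.oneComponent) * F.pair G hG t.out γ) * Φ t c = 0 := by
    intro c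
    rw [← hEq c, ← Fintype.sum_fiberwise (fun σ : ↥G => (QuotientGroup.mk σ : ↥G ⧸ N))
      (fun σ => F.restrictHom G hG σ c * F.pair G hG σ γ)]
    refine Finset.sum_congr rfl fun t _ => ?_
    have hterm : ∀ σ : {σ : ↥G // (QuotientGroup.mk σ : ↥G ⧸ N) = t},
        F.restrictHom G hG σ.1 c * F.pair G hG σ.1 γ = Φ t c * F.pair G hG t.out γ := by
      intro σ
      have h1 : Φ (QuotientGroup.mk σ.1) = F.restrictHom G hG σ.1 :=
        QuotientGroup.kerLift_mk (F.restrictHom G hG) σ.1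
      rw [σ.2] at h1
      rw [h1, hdconst σ.1 t.out (by rw [σ.2, QuotientGroup.out_eq'])]
    rw [Finset.sum_congr rfl fun σ _ => hterm σ, Finset.sum_const, Finset.card_univ,
      Fintype.card_congr (fibequiv t), ← Nat.card_eq_fintype_card, nsmul_eq_mul]
    ring
  -- Step 4: linear independence of characters
  have hinj : Function.Injective
      (fun t : ↥G ⧸ N => ((Φ t).toRingHom.toMonoidHom : ↥F.oneComponent →* ↥F.oneComponent)) := by
    intro t t' htt
    refine QuotientGroup.kerLift_injective (F.restrictHom G hG) ?_
    apply RingEquiv.ext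
    intro x
    exact DFunLike.congr_fun htt x
  have hindep := (linearIndependent_monoidHom ↥F.oneComponent ↥F.oneComponent).comp _ hinj
  have hsum : ∑ t : ↥G ⧸ N,
      ((Nat.card ↥N : ↥F.oneComponent) * F.pair G hG t.out γ) •
        ((fun f : ↥F.oneComponent →* ↥F.oneComponent => ⇑f) ∘
          (fun t : ↥G ⧸ N => (Φ t).toRingHom.toMonoidHom)) t = 0 := by
    funext c
    simpa [Finset.sum_apply, smul_eq_mul, mul_assoc] using key c
  have hcoef := Fintype.linearIndependent_iff.1 hindep
    (fun t => (Nat.card ↥N : ↥F.oneComponent) * F.pair G hG t.out γ) hsum (1 : ↥G ⧸ N)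
  -- Step 5: the coefficient is nonzero
  have hpairne : F.pair G hG (1 : ↥G ⧸ N).out γ ≠ 0 := F.pair_ne hγ
  have hcardzero : ((Nat.card ↥N : ↥F.oneComponent)) = 0 := by
    rcases mul_eq_zero.1 hcoef with h | h
    · exact h
    · exact absurd h hpairne
  -- Step 6: characteristic considerations forbid this
  obtain ⟨p, hp⟩ := CharP.exists ↥F.oneComponent
  have hNpos : 0 < Nat.card ↥N := Nat.card_pos
  rcases CharP.char_is_prime_or_zero ↥F.oneComponent p with hprime | hzero
  · haveI := Fact.mk hprime
    have hdvd : p ∣ Nat.card ↥N := (CharP.cast_eq_zero_iff _ p _).1 hcardzero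
    rw [Nat.card_eq_fintype_card] at hdvd
    obtain ⟨ν, hν⟩ := exists_prime_orderOf_dvd_card (G := ↥N) p hdvd
    have hν1 : ν ≠ 1 := by
      intro h
      rw [h, orderOf_one] at hν
      exact hprime.one_lt.ne' hν.symm
    have hνG1 : ν.1 ≠ 1 := fun h => hν1 (Subtype.ext h)
    have : ∃ γ' ∈ F.fullValueGroup, F.pair G hG ν.1 γ' ≠ 1 := by
      by_contra hall
      push_neg at hall
      exact hνG1 (F.eq_one_of_pair_eq_one ν.2 hall)
    obtain ⟨γ', hγ', hpne⟩ := this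
    have hpow : F.pair G hG ν.1 γ' ^ p = 1 := by
      rw [← F.pair_pow ν.2 hγ' p]
      have h0 : ν ^ p = 1 := by rw [← hν]; exact pow_orderOf_eq_one ν
      have h1 : ν.1 ^ p = 1 := by
        have := congrArg Subtype.val h0
        simpa using this
      rw [h1, F.pair_one_left hγ']
    have hx1 : F.pair G hG ν.1 γ' = 1 := by
      have h2 : (F.pair G hG ν.1 γ' - 1) ^ p = 0 := by
        rw [sub_pow_char, hpow, one_pow, sub_self]
      have h3 := (pow_eq_zero_iff hprime.ne_zero).1 h2
      exact sub_eq_zero.1 h3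
    exact hpne hx1
  · rw [hzero] at hp
    haveI := CharP.charP_to_charZero ↥F.oneComponent
    exact (Nat.cast_ne_zero.2 hNpos.ne') hcardzero

end GradedField
/-- Dedekind's counting bound: an injective family of monoid homs into a domain, indexed by
`ι`, from a finite monoid `M`, forces `#ι ≤ #M`. -/
theorem card_le_of_injective_monoidHom {R : Type*} [CommRing R] [NoZeroDivisors R]
    [Nontrivial R] {M : Type*} [Monoid M] [Finite M] {ι : Type*} (f : ι → (M →* R))
    (hf : Function.Injective f) : Finite ι ∧ Nat.card ι ≤ Nat.card M := by
  letI : Fintype M := Fintype.ofFinite M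
  haveI : IsDomain R := NoZeroDivisors.to_isDomain R
  have hind := (linearIndependent_monoidHom M R).comp f hf
  have hle := hind.cardinal_lift_le_rank
  rw [rank_fun', Cardinal.lift_natCast] at hle
  have hfin : Finite ι := by
    have h2 : Cardinal.lift.{_} (Cardinal.mk ι) < Cardinal.aleph0 :=
      lt_of_le_of_lt hle (Cardinal.nat_lt_aleph0 _)
    rw [Cardinal.lift_lt_aleph0] at h2
    exact (Cardinal.lt_aleph0_iff_finite).1 h2
  refine ⟨hfin, ?_⟩
  have h3 := Cardinal.toNat_le_toNat hle (Cardinal.nat_lt_aleph0 _)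
  simpa [Nat.card, Nat.card_eq_fintype_card] using h3

namespace GradedField

variable {H : Type*} [CommGroup H] [DecidableEq H] {K : Type*} [CommRing K] (F : GradedField H K)

/-- The value group of the fixed subring. -/
def ΓL (G : Subgroup (RingAut K)) : Subgroup H :=
  F.valueGroup (fixedSubring G) (fun _ hx _ _ => fixed_inverse_mem hx)

variable {G : Subgroup (RingAut K)} {hG : ∀ σ ∈ G, F.IsGradedAut σ}

theorem pair_one_right {σ : ↥G} (hσ : σ ∈ (F.restrictHom G hG).ker) :
    F.pair G hG σ (1 : H) = 1 := by
  rw [F.pair_one_iff (F.fullValueGroup.one_mem)]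
  exact F.mem_ker_restrictHom.1 hσ _ (F.u_mem 1)

theorem pair_inv_right {σ : ↥G} (hσ : σ ∈ (F.restrictHom G hG).ker) {γ : H}
    (hγ : γ ∈ F.fullValueGroup) :
    F.pair G hG σ γ * F.pair G hG σ γ⁻¹ = 1 := by
  rw [← F.pair_mul_right hσ hγ (F.fullValueGroup.inv_mem hγ), mul_inv_cancel]
  exact F.pair_one_right hσ

/-- The pairing as a monoid hom in the group variable. -/
noncomputable def pairHomN (γ : H) (hγ : γ ∈ F.fullValueGroup) :
    ↥(F.restrictHom G hG).ker →* ↥F.oneComponent where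
  toFun σ := F.pair G hG σ.1 γ
  map_one' := F.pair_one_left hγ
  map_mul' σ τ := F.pair_mul_left σ.2 hγ

/-- The pairing as a monoid hom in the value-group variable. -/
noncomputable def pairHomΓ (σ : ↥G) (hσ : σ ∈ (F.restrictHom G hG).ker) :
    ↥F.fullValueGroup →* ↥F.oneComponent where
  toFun γ := F.pair G hG σ γ.1
  map_one' := F.pair_one_right hσ
  map_mul' γ δ := F.pair_mul_right hσ γ.2 δ.2

theorem finite_and_card_quot_eq [Finite ↥G] :
    Finite (↥F.fullValueGroup ⧸ (F.ΓL G).subgroupOf F.fullValueGroup) ∧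
      Nat.card (↥F.fullValueGroup ⧸ (F.ΓL G).subgroupOf F.fullValueGroup) =
        Nat.card ↥(F.restrictHom G hG).ker := by
  classical
  haveI := F.nt
  set N := (F.restrictHom G hG).ker with hNdef
  set ΓLs := (F.ΓL G).subgroupOf F.fullValueGroup with hΓLs
  have ha : Finite (↥F.fullValueGroup ⧸ ΓLs) ∧
      Nat.card (↥F.fullValueGroup ⧸ ΓLs) ≤ Nat.card ↥N := by
    refine card_le_of_injective_monoidHom
      (fun t : ↥F.fullValueGroup ⧸ ΓLs => F.pairHomN (hG := hG) (t.out : ↥F.fullValueGroup).1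
        (t.out : ↥F.fullValueGroup).2) ?_
    intro t t' htt
    set γ := (t.out : ↥F.fullValueGroup)
    set δ := (t'.out : ↥F.fullValueGroup)
    have hpair : ∀ σ : ↥N, F.pair G hG σ.1 γ.1 = F.pair G hG σ.1 δ.1 :=
      fun σ => DFunLike.congr_fun htt σ
    have hone : ∀ σ : ↥N, F.pair G hG σ.1 (γ.1 * δ.1⁻¹) = 1 := by
      intro σ
      rw [F.pair_mul_right σ.2 γ.2 (F.fullValueGroup.inv_mem δ.2), hpair σ]
      exact F.pair_inv_right σ.2 δ.2
    have hΓ : γ.1 * δ.1⁻¹ ∈ F.fullValueGroup :=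
      F.fullValueGroup.mul_mem γ.2 (F.fullValueGroup.inv_mem δ.2)
    have hmem : γ.1 * δ.1⁻¹ ∈ F.ΓL G := by
      refine F.mem_valueGroup_of_pair_eq_one (hG := hG) hΓ ?_
      intro σ hσ
      exact (F.pair_one_iff hΓ).1 (hone ⟨σ, hσ⟩)
    have hmem2 : γ * δ⁻¹ ∈ ΓLs := by
      rw [hΓLs, Subgroup.mem_subgroupOf]
      exact hmem
    rw [← QuotientGroup.out_eq' t, ← QuotientGroup.out_eq' t', QuotientGroup.eq]
    have : γ⁻¹ * δ = (γ * δ⁻¹)⁻¹ := by rw [mul_inv_rev, inv_inv, mul_comm]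
    rw [this]
    exact Subgroup.inv_mem _ hmem2
  have hb : Nat.card ↥N ≤ Nat.card (↥F.fullValueGroup ⧸ ΓLs) := by
    haveI := ha.1
    have hkill : ∀ σ : ↥N, ∀ x ∈ ΓLs, F.pairHomΓ (hG := hG) σ.1 σ.2 x = 1 := by
      intro σ x hx
      exact F.pair_eq_one_of_mem_valueGroup σ.2 (Subgroup.mem_subgroupOf.1 hx)
    refine (card_le_of_injective_monoidHom
      (fun σ : ↥N => QuotientGroup.lift ΓLs (F.pairHomΓ σ.1 σ.2) (hkill σ)) ?_).2
    intro σ τ hst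
    have hpair : ∀ γ : ↥F.fullValueGroup, F.pair G hG σ.1 γ.1 = F.pair G hG τ.1 γ.1 := by
      intro γ
      have := DFunLike.congr_fun hst (QuotientGroup.mk γ)
      exact this
    have hone : ∀ γ ∈ F.fullValueGroup, F.pair G hG (σ.1⁻¹ * τ.1) γ = 1 := by
      intro γ hγ
      have h1 := F.pair_mul_left (τ := τ.1) (N.inv_mem σ.2) hγ
      have h2 : F.pair G hG σ.1⁻¹ γ * F.pair G hG σ.1 γ = 1 := by
        rw [← F.pair_mul_left (τ := σ.1) (N.inv_mem σ.2) hγ, inv_mul_cancel,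
          F.pair_one_left hγ]
      rw [h1, ← hpair ⟨γ, hγ⟩]
      exact h2
    have heq1 := F.eq_one_of_pair_eq_one (N.mul_mem (N.inv_mem σ.2) τ.2) hone
    exact Subtype.ext (inv_mul_eq_one.1 heq1)
  exact ⟨ha.1, le_antisymm ha.2 hb⟩

end GradedField
namespace GradedField

open DirectSum

variable {H : Type*} [CommGroup H] [DecidableEq H] {K : Type*} [CommRing K] (F : GradedField H K)

theorem eq_zero_of_components {x : K}
    (h : ∀ a : H, (DirectSum.decompose F.comp x a : K) = 0) : x = 0 := by
  classical
  rw [← DirectSum.sum_support_decompose F.comp x]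
  exact Finset.sum_eq_zero fun a _ => h a

theorem decompose_sum_coe {ι : Type*} (s : Finset ι) (f : ι → K) (a : H) :
    (DirectSum.decompose F.comp (∑ i ∈ s, f i) a : K)
      = ∑ i ∈ s, (DirectSum.decompose F.comp (f i) a : K) := by
  rw [DirectSum.decompose_sum, DFinsupp.finset_sum_apply, AddSubmonoidClass.coe_finset_sum]

theorem decompose_mul_homog {g : H} {y : K} (hy : y ∈ F.comp g) (x : K) (a : H) :
    (DirectSum.decompose F.comp (x * y) a : K)
      = (DirectSum.decompose F.comp x (a * g⁻¹) : K) * y := by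
  induction x using DirectSum.Decomposition.inductionOn F.comp with
  | zero => simp
  | @homogeneous i m =>
      have h1 : (m : K) * y ∈ F.comp (i * g) := F.mul_mem m.2 hy
      rcases eq_or_ne a (i * g) with rfl | hne
      · rw [DirectSum.decompose_of_mem_same F.comp h1]
        have h2 : i * g * g⁻¹ = i := by group
        rw [h2, DirectSum.decompose_of_mem_same F.comp m.2]
      · rw [DirectSum.decompose_of_mem_ne F.comp h1 hne.symm]
        have h3 : i ≠ a * g⁻¹ := by
          intro h
          exact hne (by rw [h]; group)
        rw [DirectSum.decompose_of_mem_ne F.comp m.2 h3, zero_mul]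
  | add x₁ x₂ hx₁ hx₂ =>
      rw [add_mul, DirectSum.decompose_add, DirectSum.decompose_add, DirectSum.add_apply,
        DirectSum.add_apply, AddSubmonoid.coe_add, AddSubmonoid.coe_add, hx₁, hx₂, add_mul]

variable (G : Subgroup (RingAut K)) (hG : ∀ σ ∈ G, F.IsGradedAut σ)

/-- The quotient of the value group of `K` by the value group of `L = K^G`. -/
abbrev LQ : Type _ := ↥F.fullValueGroup ⧸ (F.ΓL G).subgroupOf F.fullValueGroup

/-- The fixed subfield of the identity component. -/
noncomputable abbrev Lone : Subfield ↥F.oneComponent :=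
  FixedPoints.subfield ↥(F.restrictHom G hG).range ↥F.oneComponent

/-- Index of a basis of `K₁` over `L₁`. -/
noncomputable def bIdx : Set ↥F.oneComponent :=
  Module.Basis.ofVectorSpaceIndex ↥(F.Lone G hG) ↥F.oneComponent

/-- A basis of `K` over the fixed subring, indexed by pairs. -/
noncomputable def basisFam : ↥(F.bIdx G hG) × F.LQ G → K := fun p =>
  ((Module.Basis.ofVectorSpace ↥(F.Lone G hG) ↥F.oneComponent p.1 : ↥F.oneComponent) : K) *
    F.u ((p.2.out : ↥F.fullValueGroup) : H)

theorem basisFam_spans [Finite ↥G] :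
    ⊤ ≤ Submodule.span ↥(fixedSubring G) (Set.range (F.basisFam G hG)) := by
  classical
  haveI := F.nt
  haveI : Finite ↥(F.restrictHom G hG).range :=
    Finite.of_surjective _ (MonoidHom.rangeRestrict_surjective (F.restrictHom G hG))
  letI : Fintype ↥(F.bIdx G hG) :=
    FiniteDimensional.fintypeBasisIndex (Module.Basis.ofVectorSpace ↥(F.Lone G hG) ↥F.oneComponent)
  intro x _
  have hhom : ∀ (h : H), ∀ y ∈ F.comp h,
      y ∈ Submodule.span ↥(fixedSubring G) (Set.range (F.basisFam G hG)) := by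
    intro h y hy
    rcases eq_or_ne y 0 with rfl | hy0
    · exact Submodule.zero_mem _
    have hh : h ∈ F.fullValueGroup := F.mem_fullValueGroup_of hy hy0
    set t : F.LQ G := QuotientGroup.mk ⟨h, hh⟩ with ht
    set γr : ↥F.fullValueGroup := t.out with hγr
    have hrel : γr⁻¹ * ⟨h, hh⟩ ∈ (F.ΓL G).subgroupOf F.fullValueGroup := by
      apply QuotientGroup.eq.1
      exact (QuotientGroup.out_eq' t).trans ht
    have hrelH : (γr : H)⁻¹ * h ∈ F.ΓL G := Subgroup.mem_subgroupOf.1 hrel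
    obtain ⟨w, hw, hw0, hwL⟩ := hrelH
    have hz : F.u γr * w ∈ F.comp h := by
      have h2 := F.mul_mem (F.u_mem γr) hw
      have hgr : (γr : H) * ((γr : H)⁻¹ * h) = h := by group
      rwa [hgr] at h2
    have hz0 : F.u γr * w ≠ 0 := F.homog_mul_ne_zero (F.u_mem γr) hw (F.u_ne γr.2) hw0
    obtain ⟨c, hc, hceq⟩ := F.exists_ratio hy hz hz0
    set b := Module.Basis.ofVectorSpace ↥(F.Lone G hG) ↥F.oneComponent with hb
    have hcexp := b.sum_equivFun ⟨c, hc⟩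
    have hcK : c = ∑ i : ↥(F.bIdx G hG),
        ((b.equivFun ⟨c, hc⟩ i : ↥F.oneComponent) : K) * ((b i : ↥F.oneComponent) : K) := by
      conv_lhs => rw [show c = ((⟨c, hc⟩ : ↥F.oneComponent) : K) from rfl, ← hcexp]
      rw [AddSubmonoidClass.coe_finset_sum]
      exact Finset.sum_congr rfl fun i _ => rfl
    rw [hceq, hcK, Finset.sum_mul]
    refine Submodule.sum_mem _ fun i _ => ?_
    have hscmem : ((b.equivFun ⟨c, hc⟩ i : ↥F.oneComponent) : K) * w ∈ fixedSubring G :=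
      Subring.mul_mem _ ((F.mem_fixedPoints_iff (hG := hG)).1 (b.equivFun ⟨c, hc⟩ i).2) hwL
    have hbterm : ((b.equivFun ⟨c, hc⟩ i : ↥F.oneComponent) : K) * ((b i : ↥F.oneComponent) : K)
          * (F.u γr * w)
        = (⟨_, hscmem⟩ : ↥(fixedSubring G)) • F.basisFam G hG (i, t) := by
      show _ = (((b.equivFun ⟨c, hc⟩ i : ↥F.oneComponent) : K) * w) *
        (((b i : ↥F.oneComponent) : K) * F.u γr)
      ring
    rw [hbterm]
    exact Submodule.smul_mem _ _ (Submodule.subset_span ⟨(i, t), rfl⟩)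
  rw [← DirectSum.sum_support_decompose F.comp x]
  exact Submodule.sum_mem _ fun h _ => hhom h _ (SetLike.coe_mem _)

end GradedField
namespace GradedField

open DirectSum

variable {H : Type*} [CommGroup H] [DecidableEq H] {K : Type*} [CommRing K] (F : GradedField H K)
variable (G : Subgroup (RingAut K)) (hG : ∀ σ ∈ G, F.IsGradedAut σ)

theorem basisFam_indep [Finite ↥G] :
    LinearIndependent ↥(fixedSubring G) (F.basisFam G hG) := by
  classical
  haveI := F.nt
  haveI : Finite ↥(F.restrictHom G hG).range :=
    Finite.of_surjective _ (MonoidHom.rangeRestrict_surjective (F.restrictHom G hG))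
  haveI : Finite (F.LQ G) := (F.finite_and_card_quot_eq (hG := hG)).1
  letI : Fintype (F.LQ G) := Fintype.ofFinite _
  letI : Fintype ↥(F.bIdx G hG) :=
    FiniteDimensional.fintypeBasisIndex (Module.Basis.ofVectorSpace ↥(F.Lone G hG) ↥F.oneComponent)
  set b := Module.Basis.ofVectorSpace ↥(F.Lone G hG) ↥F.oneComponent with hbdef
  rw [Fintype.linearIndependent_iff]
  intro g hsum p0
  obtain ⟨i0, t0⟩ := p0
  apply Subtype.ext
  show (g (i0, t0) : K) = 0
  apply F.eq_zero_of_components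
  intro e
  by_cases he : e ∈ F.ΓL G
  swap
  · by_contra hne
    exact he ⟨_, SetLike.coe_mem _, hne, F.decompose_mem_fixed hG (g (i0, t0)).2 e⟩
  obtain ⟨w, hw, hw0, hwL⟩ := he
  set γfun : F.LQ G → H := fun t => ((t.out : ↥F.fullValueGroup) : H) with hγfun
  set a := e * γfun t0 with ha
  -- decompose the relation at degree a
  have hdec : ∑ p : ↥(F.bIdx G hG) × F.LQ G,
      (DirectSum.decompose F.comp ((g p : K) * ((b p.1 : ↥F.oneComponent) : K))
        (a * (γfun p.2)⁻¹) : K) * F.u (γfun p.2) = 0 := by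
    have h0 := congrArg (fun z => (DirectSum.decompose F.comp z a : K)) hsum
    simp only at h0
    rw [F.decompose_sum_coe] at h0
    have hterm : ∀ p : ↥(F.bIdx G hG) × F.LQ G,
        (DirectSum.decompose F.comp (g p • F.basisFam G hG p) a : K)
          = (DirectSum.decompose F.comp ((g p : K) * ((b p.1 : ↥F.oneComponent) : K))
              (a * (γfun p.2)⁻¹) : K) * F.u (γfun p.2) := by
      intro p
      have h1 : g p • F.basisFam G hG p
          = ((g p : K) * ((b p.1 : ↥F.oneComponent) : K)) * F.u (γfun p.2) := by
        show (g p : K) * F.basisFam G hG p = _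
        rw [basisFam]
        ring
      rw [h1, F.decompose_mul_homog (F.u_mem (γfun p.2))]
    rw [Finset.sum_congr rfl fun p _ => hterm p] at h0
    simpa using h0
  -- terms with second component ≠ t0 vanish
  have hvanish : ∀ p : ↥(F.bIdx G hG) × F.LQ G, p.2 ≠ t0 →
      (DirectSum.decompose F.comp ((g p : K) * ((b p.1 : ↥F.oneComponent) : K))
        (a * (γfun p.2)⁻¹) : K) * F.u (γfun p.2) = 0 := by
    intro p hp
    have hinner : (DirectSum.decompose F.comp ((g p : K) * ((b p.1 : ↥F.oneComponent) : K))
        (a * (γfun p.2)⁻¹) : K)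
          = (DirectSum.decompose F.comp (g p : K) (a * (γfun p.2)⁻¹ * 1⁻¹) : K) *
            ((b p.1 : ↥F.oneComponent) : K) := F.decompose_mul_homog (b p.1).2 _ _
    rw [hinner]
    rcases eq_or_ne (DirectSum.decompose F.comp (g p : K) (a * (γfun p.2)⁻¹ * 1⁻¹) : K) 0 with
      hz | hz
    · rw [hz, zero_mul, zero_mul]
    -- otherwise the degree lies in ΓL, contradicting p.2 ≠ t0
    exfalso
    have hdeg : a * (γfun p.2)⁻¹ * 1⁻¹ ∈ F.ΓL G :=
      ⟨_, SetLike.coe_mem _, hz, F.decompose_mem_fixed hG (g p).2 _⟩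
    have hdeg2 : γfun t0 * (γfun p.2)⁻¹ ∈ F.ΓL G := by
      have heinv : e⁻¹ ∈ F.ΓL G := (F.ΓL G).inv_mem ⟨w, hw, hw0, hwL⟩
      have h3 : γfun t0 * (γfun p.2)⁻¹ = e⁻¹ * (a * (γfun p.2)⁻¹ * 1⁻¹) := by
        rw [ha]; group
      rw [h3]
      exact (F.ΓL G).mul_mem heinv hdeg
    apply hp
    have hmem2 : (t0.out : ↥F.fullValueGroup) * (p.2.out : ↥F.fullValueGroup)⁻¹ ∈
        (F.ΓL G).subgroupOf F.fullValueGroup := by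
      rw [Subgroup.mem_subgroupOf]
      exact hdeg2
    have : (p.2.out : ↥F.fullValueGroup)⁻¹ * (t0.out : ↥F.fullValueGroup) ∈
        (F.ΓL G).subgroupOf F.fullValueGroup := by
      have hcomm : (p.2.out : ↥F.fullValueGroup)⁻¹ * (t0.out : ↥F.fullValueGroup)
          = (t0.out : ↥F.fullValueGroup) * (p.2.out : ↥F.fullValueGroup)⁻¹ := mul_comm _ _
      rw [hcomm]
      exact hmem2
    rw [← QuotientGroup.out_eq' p.2, ← QuotientGroup.out_eq' t0]
    exact (QuotientGroup.eq ).2 this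
  -- reduce to the single quotient class t0
  have hae : a * (γfun t0)⁻¹ = e := by rw [ha]; group
  have h4 : ∑ t : F.LQ G, ∑ i : ↥(F.bIdx G hG),
      (DirectSum.decompose F.comp ((g (i, t) : K) * ((b i : ↥F.oneComponent) : K))
        (a * (γfun t)⁻¹) : K) * F.u (γfun t) = 0 := by
    rw [← hdec, Fintype.sum_prod_type_right]
  have h5 := Finset.sum_eq_single (s := Finset.univ)
    (f := fun t : F.LQ G => ∑ i : ↥(F.bIdx G hG),
      (DirectSum.decompose F.comp ((g (i, t) : K) * ((b i : ↥F.oneComponent) : K))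
        (a * (γfun t)⁻¹) : K) * F.u (γfun t)) t0
    (fun t _ htne => Finset.sum_eq_zero fun i _ => hvanish (i, t) htne)
    (fun habs => absurd (Finset.mem_univ t0) habs)
  have hsingle : ∑ i : ↥(F.bIdx G hG),
      (DirectSum.decompose F.comp ((g (i, t0) : K) * ((b i : ↥F.oneComponent) : K)) e : K)
        * F.u (γfun t0) = 0 := by
    have h6 := h5.symm.trans h4
    simp only [] at h6
    rwa [hae] at h6
  -- cancel u and the witness w
  have hS : ∑ i : ↥(F.bIdx G hG),
      (DirectSum.decompose F.comp (g (i, t0) : K) e : K) * ((b i : ↥F.oneComponent) : K)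
        = 0 := by
    have h7 : (∑ i : ↥(F.bIdx G hG),
        (DirectSum.decompose F.comp ((g (i, t0) : K) * ((b i : ↥F.oneComponent) : K)) e : K))
          * F.u (γfun t0) = 0 * F.u (γfun t0) := by
      rw [Finset.sum_mul, zero_mul, ← hsingle]
    have h8 := F.mul_cancel_homog (F.u_mem (γfun t0)) (F.u_ne (t0.out).2) h7
    rw [← h8]
    refine Finset.sum_congr rfl fun i _ => ?_
    have h9 := F.decompose_mul_homog (g := (1 : H)) (b i).2 (g (i, t0) : K) e
    rw [inv_one, mul_one] at h9
    exact h9.symm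
  set cK : ↥(F.bIdx G hG) → K := fun i =>
    (DirectSum.decompose F.comp (g (i, t0) : K) e : K) * Ring.inverse w with hcK
  have hS2 : ∑ i : ↥(F.bIdx G hG), cK i * ((b i : ↥F.oneComponent) : K) = 0 := by
    have h10 := congrArg (fun z => z * Ring.inverse w) hS
    simp only [Finset.sum_mul, zero_mul] at h10
    rw [← h10]
    refine Finset.sum_congr rfl fun i _ => ?_
    rw [hcK]
    ring
  have hcmem1 : ∀ i, cK i ∈ F.comp 1 := by
    intro i
    have := F.mul_mem (SetLike.coe_mem (DirectSum.decompose F.comp (g (i, t0) : K) e))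
      (F.inverse_mem hw)
    simpa using this
  have hcmemL : ∀ i, cK i ∈ fixedSubring G := fun i =>
    Subring.mul_mem _ (F.decompose_mem_fixed hG (g (i, t0)).2 e) (fixed_inverse_mem hwL)
  set cL : ↥(F.bIdx G hG) → ↥(F.Lone G hG) := fun i =>
    ⟨⟨cK i, hcmem1 i⟩, (F.mem_fixedPoints_iff (hG := hG)).2 (hcmemL i)⟩ with hcL
  have hKsum : ∑ i, cL i • b i = (0 : ↥F.oneComponent) := by
    apply Subtype.ext
    rw [AddSubmonoidClass.coe_finset_sum]
    exact hS2
  have hc0 := Fintype.linearIndependent_iff.1 b.linearIndependent cL hKsum i0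
  have hcK0 : cK i0 = 0 := by
    have := congrArg (fun z : ↥(F.Lone G hG) => ((z : ↥F.oneComponent) : K)) hc0
    simpa [hcL] using this
  calc (DirectSum.decompose F.comp (g (i0, t0) : K) e : K)
      = (DirectSum.decompose F.comp (g (i0, t0) : K) e : K) * (Ring.inverse w * w) := by
        rw [F.inverse_mul_homog hw hw0, mul_one]
    _ = cK i0 * w := by rw [hcK, mul_assoc]
    _ = 0 := by rw [hcK0, zero_mul]

end GradedField
namespace GradedField

variable {H : Type*} [CommGroup H] [DecidableEq H] {K : Type*} [CommRing K]

theorem rank_fixed (F : GradedField H K) (G : Subgroup (RingAut K))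
    (hG : ∀ σ ∈ G, F.IsGradedAut σ) [Finite ↥G] :
    Module.rank ↥(fixedSubring G) K = Nat.card ↥G := by
  classical
  haveI := F.nt
  haveI : Finite ↥(F.restrictHom G hG).range :=
    Finite.of_surjective _ (MonoidHom.rangeRestrict_surjective (F.restrictHom G hG))
  letI : Fintype ↥(F.restrictHom G hG).range := Fintype.ofFinite _
  haveI : Finite (F.LQ G) := (F.finite_and_card_quot_eq (hG := hG)).1
  letI : Fintype (F.LQ G) := Fintype.ofFinite _
  letI : Fintype ↥(F.bIdx G hG) :=
    FiniteDimensional.fintypeBasisIndex (Module.Basis.ofVectorSpace ↥(F.Lone G hG) ↥F.oneComponent)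
  let B : Module.Basis (↥(F.bIdx G hG) × F.LQ G) ↥(fixedSubring G) K :=
    Module.Basis.mk (F.basisFam_indep G hG) (F.basisFam_spans G hG)
  haveI : Module.Finite ↥(fixedSubring G) K := Module.Finite.of_basis B
  rw [← Module.finrank_eq_rank]
  have hmain : Module.finrank ↥(fixedSubring G) K = Nat.card ↥G := by
    have hfr : Module.finrank ↥(fixedSubring G) K
        = Fintype.card (↥(F.bIdx G hG) × F.LQ G) := Module.finrank_eq_card_basis B
    have h1 : Fintype.card ↥(F.bIdx G hG) = Fintype.card ↥(F.restrictHom G hG).range := by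
      rw [← FixedPoints.finrank_eq_card ↥(F.restrictHom G hG).range ↥F.oneComponent]
      exact (Module.finrank_eq_card_basis
        (Module.Basis.ofVectorSpace ↥(F.Lone G hG) ↥F.oneComponent)).symm
    have h2 : Fintype.card (F.LQ G) = Nat.card ↥(F.restrictHom G hG).ker := by
      rw [← Nat.card_eq_fintype_card]
      exact (F.finite_and_card_quot_eq (hG := hG)).2
    have h3 : Nat.card ↥G
        = Fintype.card ↥(F.restrictHom G hG).range * Nat.card ↥(F.restrictHom G hG).ker := by
      rw [Subgroup.card_eq_card_quotient_mul_card_subgroup (F.restrictHom G hG).ker]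
      congr 1
      rw [← Nat.card_eq_fintype_card]
      exact Nat.card_congr (QuotientGroup.quotientKerEquivRange (F.restrictHom G hG)).toEquiv
    rw [hfr, Fintype.card_prod, h1, h2, h3]
  rw [hmain]

end GradedField

/-- Artin's lemma for graded fields: if `G` is a finite group of graded automorphisms of an
`H`-graded field `K`, then the invariant subring `L = K^G` is a graded subfield of `K` and
`[K:L] = #G`. -/
theorem GradedField.isGradedSubfield_fixed_and_rank_eq_card {H : Type*} [CommGroup H]
    [DecidableEq H] {K : Type*} [CommRing K] (F : GradedField H K)
    (G : Subgroup (RingAut K)) [Finite G] (hG : ∀ σ ∈ G, F.IsGradedAut σ) :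
    F.IsGradedSubfield (fixedSubring G) ∧
      Module.rank ↥(fixedSubring G) K = Nat.card G :=
  ⟨F.isGradedSubfield_fixed hG, F.rank_fixed G hG⟩
end ZR
end

section
/- Let K be an H-graded field and G a finite group of graded automorphisms of K. The inertia subgroup I ⊆ G (the subgroup of elements acting trivially on the field K₁) is abelian: for σ ∈ I and each r in the image of the grading map ρ on homogeneous units, σ acts on the one-dimensional K₁-vector space K_r by multiplication by a root of unity ξ_{σ,r} ∈ K₁^×, and the resulting map σ ↦ (ξ_{σ,·}) is an injective homomorphism from I into an abelian group. -/
open scoped DirectSum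

section ZR

variable {H : Type*} [CommGroup H] [DecidableEq H] {K : Type*} [CommRing K]

/-- Two ring automorphisms agreeing on every homogeneous component are equal. -/
theorem GradedField.aut_ext_of_components {H : Type*} [CommGroup H] [DecidableEq H]
    {K : Type*} [CommRing K] (F : GradedField H K) {σ τ : RingAut K}
    (h : ∀ (g : H) (x : K), x ∈ F.comp g → σ x = τ x) : σ = τ := by
  ext x
  obtain ⟨y, rfl⟩ := F.isInternal.surjective x
  induction y using DirectSum.induction_on with
  | zero => simp
  | of i z =>
      have hz : (DirectSum.coeAddMonoidHom fun h : H => F.comp h) (DirectSum.of _ i z)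
          = (z : K) := by simp
      rw [hz]
      exact h i z z.2
  | add a b ha hb => rw [map_add, map_add, map_add, ha, hb]

/-- A homogeneous element of degree `r ∈ ρ(K^×)` is scaled by a root of unity in `K₁`
by any inertia element. -/
theorem GradedField.inertia_scaling {H : Type*} [CommGroup H] [DecidableEq H] {K : Type*}
    [CommRing K] (F : GradedField H K) (G : Subgroup (RingAut K)) [Finite G]
    (hG : ∀ σ ∈ G, F.IsGradedAut σ) {σ : RingAut K} (hσ : σ ∈ F.inertia G)
    {r : H} (hr : r ∈ F.fullValueGroup) :
    ∃ ξ ∈ F.oneComponent, ξ ≠ 0 ∧ (∃ n : ℕ, 0 < n ∧ ξ ^ n = 1) ∧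
      ∀ x ∈ F.comp r, σ x = ξ * x := by
  obtain ⟨x, hx, hx0, -⟩ := hr
  obtain ⟨y, hy, hxy⟩ := F.inv_mem hx hx0
  have hσx : σ x ∈ F.comp r := hG σ hσ.1 r x hx
  set ξ : K := σ x * y with hξ
  have hξ1 : ξ ∈ F.comp 1 := by
    have := F.mul_mem hσx hy
    simpa using this
  have hξx : ξ * x = σ x := by
    rw [hξ, mul_assoc, mul_comm y x, hxy, mul_one]
  have hσx0 : σ x ≠ 0 := by
    intro h0
    exact hx0 (σ.injective (a₁ := x) (a₂ := 0) (by rw [h0, map_zero]))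
  have hξ0 : ξ ≠ 0 := by
    intro h0
    exact hσx0 (by rw [← hξx, h0, zero_mul])
  have hfix : ∀ k : ℕ, σ (ξ ^ k) = ξ ^ k := fun k => by
    rw [map_pow, hσ.2 ξ hξ1]
  have hiter : ∀ k : ℕ, (σ ^ k) x = ξ ^ k * x := by
    intro k
    induction k with
    | zero => simp only [pow_zero, one_mul]; rfl
    | succ k ih =>
        rw [pow_succ', pow_succ']
        show σ ((σ ^ k) x) = ξ * ξ ^ k * x
        rw [ih, map_mul, hfix k, ← hξx]
        ring
  set g : G := ⟨σ, hσ.1⟩ with hg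
  have hn : 0 < orderOf g := orderOf_pos g
  have hpow : σ ^ orderOf g = 1 := by
    have h2 : ((g ^ orderOf g : G) : RingAut K) = σ ^ orderOf g := by
      simp [hg]
    rw [pow_orderOf_eq_one g] at h2
    simpa using h2.symm
  have hξn : ξ ^ orderOf g = 1 := by
    have h1 : (σ ^ orderOf g) x = x := by rw [hpow]; rfl
    rw [hiter (orderOf g)] at h1
    have h3 := congrArg (· * y) h1
    simp only [mul_assoc, hxy, mul_one] at h3
    exact h3
  refine ⟨ξ, hξ1, hξ0, ⟨orderOf g, hn, hξn⟩, ?_⟩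
  intro z hz
  have hc : z * y ∈ F.comp 1 := by
    have := F.mul_mem hz hy; simpa using this
  have hcz : (z * y) * x = z := by rw [mul_assoc, mul_comm y x, hxy, mul_one]
  calc σ z = σ ((z * y) * x) := by rw [hcz]
    _ = σ (z * y) * σ x := by rw [map_mul]
    _ = (z * y) * (ξ * x) := by rw [hσ.2 _ hc, hξx]
    _ = ξ * ((z * y) * x) := by ring
    _ = ξ * z := by rw [hcz]

/-- The inertia subgroup `I ⊆ G` of elements acting trivially on `K₁` is abelian: each
`σ ∈ I` acts on the one-dimensional `K₁`-vector space `K_r` (for `r ∈ ρ(K^×)`) by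
multiplication by a root of unity `ξ_{σ,r} ∈ K₁^×`, any two elements of `I` commute, and an
element of `I` is determined by the family `(ξ_{σ,·})` of its scaling factors (so
`σ ↦ ξ_{σ,·}` is an injective homomorphism into an abelian group). -/
theorem GradedField.inertia_abelian {H : Type*} [CommGroup H] [DecidableEq H] {K : Type*}
    [CommRing K] (F : GradedField H K) (G : Subgroup (RingAut K)) [Finite G]
    (hG : ∀ σ ∈ G, F.IsGradedAut σ) :
    (∀ σ ∈ F.inertia G, ∀ r ∈ F.fullValueGroup,
      ∃ ξ ∈ F.oneComponent, ξ ≠ 0 ∧ (∃ n : ℕ, 0 < n ∧ ξ ^ n = 1) ∧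
        ∀ x ∈ F.comp r, σ x = ξ * x) ∧
    (∀ σ ∈ F.inertia G, ∀ τ ∈ F.inertia G, σ * τ = τ * σ) ∧
    (∀ σ ∈ F.inertia G, ∀ τ ∈ F.inertia G,
      (∀ r ∈ F.fullValueGroup, ∀ x ∈ F.comp r, σ x = τ x) → σ = τ) := by
  have key : ∀ σ ∈ F.inertia G, ∀ r ∈ F.fullValueGroup,
      ∃ ξ ∈ F.oneComponent, ξ ≠ 0 ∧ (∃ n : ℕ, 0 < n ∧ ξ ^ n = 1) ∧
        ∀ x ∈ F.comp r, σ x = ξ * x := fun σ hσ r hr => F.inertia_scaling G hG hσ hr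
  refine ⟨key, ?_, ?_⟩
  · intro σ hσ τ hτ
    apply F.aut_ext_of_components
    intro g x hx
    rcases eq_or_ne x 0 with rfl | hx0
    · simp
    · have hg : g ∈ F.fullValueGroup := ⟨x, hx, hx0, Subring.mem_top x⟩
      obtain ⟨ξσ, hξσ1, -, -, hξσ⟩ := key σ hσ g hg
      obtain ⟨ξτ, hξτ1, -, -, hξτ⟩ := key τ hτ g hg
      have hτx : τ x ∈ F.comp g := hG τ hτ.1 g x hx
      have hσx : σ x ∈ F.comp g := hG σ hσ.1 g x hx
      show σ (τ x) = τ (σ x)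
      rw [hξτ x hx, hξσ x hx, map_mul, map_mul, hσ.2 ξτ hξτ1, hτ.2 ξσ hξσ1,
        hξσ x hx, hξτ x hx]
      ring
  · intro σ hσ τ hτ hst
    apply F.aut_ext_of_components
    intro g x hx
    rcases eq_or_ne x 0 with rfl | hx0
    · simp
    · exact hst g ⟨x, hx, hx0, Subring.mem_top x⟩ x hx
end ZR
end

section
/- Let k'/k be a field extension of finite degree d and V' a valuation ring of k'. Then for every x ∈ k'^× one has x^{d!} ∈ k^× · V'^×; that is, the d!-th power of any nonzero element of k' is the product of a nonzero element of k and a unit of V'. -/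
/-- If `k'/k` is a finite field extension of degree `d` and `V'` is a valuation ring of `k'`,
then for every nonzero `x ∈ k'`, the power `x ^ d!` is a product of a nonzero element of `k`
and a unit of `V'`. -/
theorem pow_factorial_mem_base_mul_unit {k k' : Type*} [Field k] [Field k'] [Algebra k k']
    [FiniteDimensional k k'] (V' : ValuationSubring k') (x : k') (hx : x ≠ 0) :
    ∃ (c : k) (u : k'), c ≠ 0 ∧ u ∈ V' ∧ (∃ v ∈ V', u * v = 1) ∧
      x ^ Nat.factorial (Module.finrank k k') = algebraMap k k' c * u := by
  classical
  set n := Module.finrank k k' with hn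
  -- the n+1 powers x^0, ..., x^n are linearly dependent over k
  have hdep : ¬ LinearIndependent k (fun i : Fin (n + 1) => x ^ (i : ℕ)) := by
    intro h
    have := h.fintype_card_le_finrank
    simp [← hn] at this
  obtain ⟨g, hsum, i0, hgi0⟩ := Fintype.not_linearIndependent_iff.mp hdep
  set a : Fin (n + 1) → k' := fun i => algebraMap k k' (g i) * x ^ (i : ℕ) with ha
  have hsum' : ∑ i, a i = 0 := by
    rw [← hsum]; apply Finset.sum_congr rfl; intro i _; rw [ha, Algebra.smul_def]
  set v := V'.valuation with hv
  set S : Finset (Fin (n + 1)) := Finset.univ.filter (fun i => g i ≠ 0) with hS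
  have hSne : S.Nonempty := ⟨i0, by simp [hS, hgi0]⟩
  obtain ⟨i, hiS, hmax⟩ := S.exists_max_image (fun i => v (a i)) hSne
  have hgi : g i ≠ 0 := by simpa [hS] using hiS
  have hai : a i ≠ 0 := by
    simp only [ha, mul_ne_zero_iff]
    exact ⟨fun h => hgi ((algebraMap k k').injective (by simpa using h)), pow_ne_zero _ hx⟩
  have hvai : v (a i) ≠ 0 := by simpa using hai
  -- there is another index with the same (maximal) valuation
  have hj : ∃ j ∈ S, j ≠ i ∧ v (a j) = v (a i) := by
    by_contra hcon
    push_neg at hcon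
    have hlt : ∀ j ∈ Finset.univ.erase i, v (a j) < v (a i) := by
      intro j hj
      have hji : j ≠ i := (Finset.mem_erase.mp hj).1
      by_cases hgj : g j = 0
      · have : a j = 0 := by simp [ha, hgj]
        rw [this]; simpa [zero_lt_iff] using hvai
      · have hjS : j ∈ S := by simp [hS, hgj]
        exact lt_of_le_of_ne (hmax j hjS) (hcon j hjS hji)
    have h1 : v (∑ j ∈ Finset.univ.erase i, a j) < v (a i) :=
      v.map_sum_lt hvai hlt
    have h2 : ∑ j ∈ Finset.univ.erase i, a j = -a i := by
      have := Finset.add_sum_erase Finset.univ a (Finset.mem_univ i)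
      rw [hsum'] at this
      linear_combination this
    rw [h2, Valuation.map_neg] at h1
    exact lt_irrefl _ h1
  obtain ⟨j, hjS, hji, hvj⟩ := hj
  have hgj : g j ≠ 0 := by simpa [hS] using hjS
  -- arrange p > q
  obtain ⟨p, q, hpq, hgp, hgq, hvpq⟩ :
      ∃ p q : Fin (n + 1), (q : ℕ) < (p : ℕ) ∧ g p ≠ 0 ∧ g q ≠ 0 ∧ v (a p) = v (a q) := by
    rcases lt_or_gt_of_ne (fun h : (j : ℕ) = (i : ℕ) => hji (Fin.ext h)) with h | h
    · exact ⟨i, j, h, hgi, hgj, hvj.symm⟩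
    · exact ⟨j, i, h, hgj, hgi, hvj⟩
  set e := (p : ℕ) - (q : ℕ) with he
  have he0 : 0 < e := Nat.sub_pos_of_lt hpq
  have hen : e ≤ n := le_trans (Nat.sub_le _ _) (Nat.lt_succ_iff.mp p.isLt)
  have hed : e ∣ n.factorial := Nat.dvd_factorial he0 hen
  set m := n.factorial / e with hm
  have hem : e * m = n.factorial := Nat.mul_div_cancel' hed
  set u : k' := x ^ e * algebraMap k k' (g p / g q) with hu
  have hgp' : algebraMap k k' (g p) ≠ 0 := fun h => hgp (by
    exact (algebraMap k k').injective (by simpa using h))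
  have hgq' : algebraMap k k' (g q) ≠ 0 := fun h => hgq (by
    exact (algebraMap k k').injective (by simpa using h))
  have haq : a q ≠ 0 := mul_ne_zero hgq' (pow_ne_zero _ hx)
  have hudiv : u = a p / a q := by
    rw [hu, ha]
    field_simp
    rw [show ((p : ℕ)) = (q : ℕ) + e from (Nat.add_sub_cancel' hpq.le).symm, pow_add]
    simp only [map_div₀, map_mul, map_inv₀]
    field_simp
  have hvu : v u = 1 := by
    rw [hudiv, map_div₀, hvpq, div_self (by simpa using haq)]
  have humem : u ∈ V' := (V'.valuation_le_one_iff u).mp (le_of_eq hvu)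
  have huinv : u⁻¹ ∈ V' := (V'.valuation_le_one_iff _).mp (by rw [map_inv₀, hvu, inv_one])
  have hune : u ≠ 0 := fun h => by simp [h] at hvu
  -- x ^ e = algebraMap (g q / g p) * u
  have hxe : x ^ e = algebraMap k k' (g q / g p) * u := by
    rw [hu, map_div₀, map_div₀]
    field_simp
  refine ⟨(g q / g p) ^ m, u ^ m, pow_ne_zero _ (div_ne_zero hgq hgp),
    pow_mem humem m, ⟨(u⁻¹) ^ m, pow_mem huinv m, by
      rw [← mul_pow, mul_inv_cancel₀ hune, one_pow]⟩, ?_⟩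
  rw [← hem, pow_mul, hxe, mul_pow, map_pow]
end
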